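/- arXiv:2412.15287 — 13 statements merged into one kernel-verified Lean document; each statement's English description precedes it below -/
import Mathlib

section
/- Let Y be a finite type, π a positive pmf on Y, r : Y → ℝ an injective verifier score, and N ≥ 1 an integer. Let Y₁,…,Y_N be independent samples from π and let Y* be the sample attaining the maximal score, i.e. Y* = Y_{i*} where r(Y_{i*}) = max_{1≤i≤N} r(Y_i) (this maximal value is attained by a unique element of Y since r is injective). Then for every y ∈ Y, P(Y* = y) = F(y)^N − (F(y) − π(y))^N, where F(y) = ∑_{y' : r(y') ≤ r(y)} π(y'). -/
open scoped Classical

/-- **Distribution of the Best-of-N sample.**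
Draw `N` i.i.d. samples from a positive pmf `π` on a finite type `Y` (modelled by the product
distribution on tuples `s : Fin N → Y`, with joint probability `∏ i, π (s i)`), and let `Y*` be
the sample with the maximal (injective) verifier score `r`.  Since `r` is injective, for a tuple
`s` the event `Y* = y` is exactly: `y` occurs among the samples and every sample has score
`≤ r y`.  Then `P(Y* = y) = F(y)^N − (F(y) − π(y))^N`, where `F(y) = ∑_{y' : r y' ≤ r y} π y'`. -/
theorem stmt_1 {Y : Type*} [Fintype Y]
    (π : Y → ℝ) (hπpos : ∀ y, 0 < π y) (hπsum : ∑ y, π y = 1)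
    (r : Y → ℝ) (hr : Function.Injective r)
    (N : ℕ) (hN : 1 ≤ N) (y : Y) :
    ∑ s ∈ Finset.univ.filter
        (fun s : Fin N → Y => (∃ i, s i = y) ∧ ∀ i, r (s i) ≤ r y),
      ∏ i, π (s i)
    = (∑ y' ∈ Finset.univ.filter (fun y' => r y' ≤ r y), π y') ^ N
      - ((∑ y' ∈ Finset.univ.filter (fun y' => r y' ≤ r y), π y') - π y) ^ N := by
  classical
  set A := Finset.univ.filter (fun y' => r y' ≤ r y) with hA
  have hyA : y ∈ A := by simp [hA]
  have key : ∀ B : Finset Y,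
      ∑ s ∈ Fintype.piFinset (fun _ : Fin N => B), ∏ i, π (s i)
        = (∑ y' ∈ B, π y') ^ N := by
    intro B
    rw [← Finset.prod_univ_sum]
    simp [Finset.prod_const]
  have hsub : Fintype.piFinset (fun _ : Fin N => A.erase y)
      ⊆ Fintype.piFinset (fun _ : Fin N => A) := by
    intro s hs
    simp only [Fintype.mem_piFinset] at hs ⊢
    exact fun i => Finset.mem_of_mem_erase (hs i)
  have hset : Finset.univ.filter
      (fun s : Fin N → Y => (∃ i, s i = y) ∧ ∀ i, r (s i) ≤ r y)
      = Fintype.piFinset (fun _ : Fin N => A) \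
        Fintype.piFinset (fun _ : Fin N => A.erase y) := by
    ext s
    simp only [Finset.mem_filter, Finset.mem_univ, true_and, Finset.mem_sdiff,
      Fintype.mem_piFinset, Finset.mem_erase, hA, Finset.mem_filter, not_forall]
    constructor
    · rintro ⟨⟨i, hi⟩, hall⟩
      exact ⟨hall, ⟨i, fun h => h.1 hi⟩⟩
    · rintro ⟨hall, ⟨i, hi⟩⟩
      refine ⟨⟨i, ?_⟩, hall⟩
      by_contra h
      exact hi ⟨h, hall i⟩
  rw [hset, Finset.sum_sdiff_eq_sub hsub, key, key,
    Finset.sum_erase_eq_sub hyA]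
end

section
/- Let Y be a finite type, π a positive pmf on Y, R : Y → {0,1} a binary reward, and N ≥ 1 an integer. Set p = ∑_{y : R(y)=0} π(y) and assume 0 < p < 1. Draw Y₁,…,Y_N i.i.d. from π, let M = {i : R(Y_i) = 1} if this set is nonempty and M = {1,…,N} otherwise, draw an index I uniformly at random from M (independently of everything else given Y₁,…,Y_N), and set Y* = Y_I. Then for every y ∈ Y: P(Y* = y) = π(y)·p^{N−1} if R(y) = 0, and P(Y* = y) = π(y)·(1 − p^N)/(1 − p) if R(y) = 1. -/
open scoped Classical

lemma sum_prod_pi {Y : Type*} [Fintype Y] {N : ℕ} (f : Fin N → Y → ℝ) :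
    ∑ s : Fin N → Y, ∏ i, f i (s i) = ∏ i, ∑ v, f i v := by
  rw [Finset.prod_univ_sum, Fintype.piFinset_univ]

lemma sum_ite_const {α : Type*} (t : Finset α) (P : α → Prop) [DecidablePred P] (c : ℝ) :
    ∑ i ∈ t, (if P i then c else 0) = ((t.filter P).card : ℝ) * c := by
  rw [Finset.sum_ite, Finset.sum_const, Finset.sum_const]
  simp [nsmul_eq_mul]

lemma fiber_zero {Y : Type*} [Fintype Y] {N : ℕ} (π R : Y → ℝ) (y : Y)
    (A : Finset (Fin N)) (i : Fin N) (h : ¬ (i ∈ A ↔ R y = 1)) :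
    ∑ s : Fin N → Y, (if Finset.univ.filter (fun j => R (s j) = 1) = A ∧ s i = y
      then ∏ j, π (s j) else 0) = 0 := by
  apply Finset.sum_eq_zero
  intro s _
  rw [if_neg]
  rintro ⟨hA, hy⟩
  apply h
  rw [← hA, Finset.mem_filter]
  simp [hy]

lemma fiber_sum {Y : Type*} [Fintype Y] {N : ℕ} (π R : Y → ℝ)
    (hR : ∀ v, R v = 0 ∨ R v = 1) (y : Y)
    (A : Finset (Fin N)) (i : Fin N) (hiy : i ∈ A ↔ R y = 1) :
    ∑ s : Fin N → Y, (if Finset.univ.filter (fun j => R (s j) = 1) = A ∧ s i = y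
      then ∏ j, π (s j) else 0)
    = π y * (∑ v ∈ Finset.univ.filter (fun v => R v = 1), π v)
          ^ ((Finset.univ.erase i).filter (fun j => j ∈ A)).card
        * (∑ v ∈ Finset.univ.filter (fun v => R v = 0), π v)
          ^ ((Finset.univ.erase i).filter (fun j => ¬ j ∈ A)).card := by
  have key : ∀ s : Fin N → Y,
      (if Finset.univ.filter (fun j => R (s j) = 1) = A ∧ s i = y then ∏ j, π (s j) else 0)
      = ∏ j, (fun j v => if j = i then (if v = y then π v else 0)
          else (if (j ∈ A ↔ R v = 1) then π v else 0)) j (s j) := by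
    intro s
    by_cases hc : Finset.univ.filter (fun j => R (s j) = 1) = A ∧ s i = y
    · rw [if_pos hc]
      apply Finset.prod_congr rfl
      intro j _
      by_cases hj : j = i
      · subst hj; simp [hc.2]
      · simp only [if_neg hj]
        rw [if_pos]
        rw [← hc.1, Finset.mem_filter]; simp
    · rw [if_neg hc]
      symm
      by_cases hy : s i = y
      · have hA : Finset.univ.filter (fun j => R (s j) = 1) ≠ A := fun h => hc ⟨h, hy⟩
        have hex : ∃ j, ¬ (j ∈ A ↔ R (s j) = 1) := by
          by_contra hall
          push_neg at hall
          apply hA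
          ext j
          simp only [Finset.mem_filter, Finset.mem_univ, true_and]
          exact (hall j).symm
        obtain ⟨j, hj⟩ := hex
        have hji : j ≠ i := by
          rintro rfl
          rw [hy] at hj
          exact hj hiy
        apply Finset.prod_eq_zero (Finset.mem_univ j)
        simp [hji, hj]
      · apply Finset.prod_eq_zero (Finset.mem_univ i)
        simp [hy]
  simp only [key]
  rw [sum_prod_pi (fun j v => if j = i then (if v = y then π v else 0)
      else (if (j ∈ A ↔ R v = 1) then π v else 0))]
  rw [← Finset.mul_prod_erase _ _ (Finset.mem_univ i)]
  have f1 : (∑ v, if i = i then (if v = y then π v else 0)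
      else (if (i ∈ A ↔ R v = 1) then π v else 0)) = π y := by
    simp [Finset.sum_ite_eq' Finset.univ y π]
  rw [f1]
  have f2 : ∀ j ∈ Finset.univ.erase i,
      (∑ v, if j = i then (if v = y then π v else 0)
        else (if (j ∈ A ↔ R v = 1) then π v else 0))
      = if j ∈ A then (∑ v ∈ Finset.univ.filter (fun v => R v = 1), π v)
        else (∑ v ∈ Finset.univ.filter (fun v => R v = 0), π v) := by
    intro j hj
    have hji : j ≠ i := (Finset.mem_erase.mp hj).1
    simp only [if_neg hji]
    by_cases hjA : j ∈ A
    · rw [if_pos hjA, Finset.sum_filter]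
      apply Finset.sum_congr rfl
      intro v _
      simp [hjA]
    · rw [if_neg hjA, Finset.sum_filter]
      apply Finset.sum_congr rfl
      intro v _
      rcases hR v with h0 | h1
      · simp [hjA, h0]
      · simp [hjA, h1]
  rw [Finset.prod_congr rfl f2, Finset.prod_ite, Finset.prod_const, Finset.prod_const]
  ring

def MAux {N : ℕ} (A : Finset (Fin N)) : Finset (Fin N) :=
  if A.Nonempty then A else Finset.univ

/-- **Closed form of the binary-reward Best-of-N distribution.**
Draw `N` i.i.d. samples from a positive pmf `π` on a finite type `Y` (modelled by the product
distribution on tuples `s : Fin N → Y`).  Given the tuple `s`, let `M` be the set of indices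
with reward `1` if nonempty, and otherwise all indices; choose an index `I` uniformly from `M`
and return `Y* = s I`.  With `p = ∑_{y : R y = 0} π y ∈ (0,1)`, the probability that `Y* = y`
is `π y * p^(N−1)` if `R y = 0` and `π y * (1 − p^N)/(1 − p)` if `R y = 1`. -/
theorem stmt_2 {Y : Type*} [Fintype Y]
    (π : Y → ℝ) (hπpos : ∀ y, 0 < π y) (hπsum : ∑ y, π y = 1)
    (R : Y → ℝ) (hR : ∀ y, R y = 0 ∨ R y = 1)
    (N : ℕ) (hN : 1 ≤ N)
    (p : ℝ) (hp : p = ∑ y ∈ Finset.univ.filter (fun y => R y = 0), π y)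
    (hp0 : 0 < p) (hp1 : p < 1)
    (M : (Fin N → Y) → Finset (Fin N))
    (hM : ∀ s, M s =
      if (Finset.univ.filter (fun i => R (s i) = 1)).Nonempty
      then Finset.univ.filter (fun i => R (s i) = 1)
      else Finset.univ)
    (y : Y) :
    ∑ s : Fin N → Y,
        (∏ i, π (s i)) * (((M s).filter (fun i => s i = y)).card : ℝ) / ((M s).card : ℝ)
      = if R y = 0 then π y * p ^ (N - 1) else π y * (1 - p ^ N) / (1 - p) := by
  classical
  have hcardN : ((Finset.univ : Finset (Fin N)).card : ℝ) = (N : ℝ) := by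
    simp [Finset.card_univ]
  have hNne : ((Finset.univ : Finset (Fin N)).card : ℝ) ≠ 0 := by
    rw [hcardN]
    exact_mod_cast Nat.one_le_iff_ne_zero.mp hN
  have hq : (∑ v ∈ Finset.univ.filter (fun v => R v = 1), π v) = 1 - p := by
    have h := Finset.sum_filter_add_sum_filter_not Finset.univ (fun v => R v = 0) π
    have hfe : Finset.univ.filter (fun v => ¬ R v = 0)
        = Finset.univ.filter (fun v => R v = 1) := by
      apply Finset.filter_congr
      intro v _
      rcases hR v with h0 | h0 <;> simp [h0]
    rw [hπsum, hfe, ← hp] at h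
    linarith
  -- Step 1: rewrite each summand as a sum over fibers A
  have step1 : ∀ s : Fin N → Y,
      (∏ i, π (s i)) * (((M s).filter (fun i => s i = y)).card : ℝ) / ((M s).card : ℝ)
      = ∑ A : Finset (Fin N), (∑ i ∈ MAux A,
          if Finset.univ.filter (fun j => R (s j) = 1) = A ∧ s i = y
          then ∏ j, π (s j) else 0) / ((MAux A).card : ℝ) := by
    intro s
    rw [hM s]
    symm
    rw [Finset.sum_eq_single (Finset.univ.filter fun j => R (s j) = 1)]
    · have hc : ∀ i ∈ MAux (Finset.univ.filter fun j => R (s j) = 1),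
          (if Finset.univ.filter (fun j => R (s j) = 1)
              = Finset.univ.filter (fun j => R (s j) = 1) ∧ s i = y
           then ∏ j, π (s j) else 0)
          = if s i = y then ∏ j, π (s j) else 0 := by
        intro i _
        simp
      rw [Finset.sum_congr rfl hc, sum_ite_const]
      simp only [MAux]
      ring
    · intro A _ hA
      have hz : ∀ i ∈ MAux A,
          (if Finset.univ.filter (fun j => R (s j) = 1) = A ∧ s i = y
           then ∏ j, π (s j) else 0) = 0 := by
        intro i _
        rw [if_neg]
        rintro ⟨h1, _⟩
        exact hA h1.symm
      rw [Finset.sum_eq_zero hz, zero_div]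
    · intro h
      exact absurd (Finset.mem_univ _) h
  rw [Finset.sum_congr rfl (fun s _ => step1 s), Finset.sum_comm]
  have step2 : ∀ A : Finset (Fin N),
      (∑ s : Fin N → Y, (∑ i ∈ MAux A,
          if Finset.univ.filter (fun j => R (s j) = 1) = A ∧ s i = y
          then ∏ j, π (s j) else 0) / ((MAux A).card : ℝ))
      = (∑ i ∈ MAux A, ∑ s : Fin N → Y,
          if Finset.univ.filter (fun j => R (s j) = 1) = A ∧ s i = y
          then ∏ j, π (s j) else 0) / ((MAux A).card : ℝ) := by
    intro A
    rw [← Finset.sum_div, Finset.sum_comm]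
  rw [Finset.sum_congr rfl (fun A _ => step2 A)]
  by_cases hRy : R y = 0
  · -- case R y = 0
    rw [if_pos hRy]
    have hRy1 : ¬ (R y = 1) := by rw [hRy]; norm_num
    have termA : ∀ A : Finset (Fin N),
        (∑ i ∈ MAux A, ∑ s : Fin N → Y,
          if Finset.univ.filter (fun j => R (s j) = 1) = A ∧ s i = y
          then ∏ j, π (s j) else 0) / ((MAux A).card : ℝ)
        = if A = ∅ then π y * p ^ (N - 1) else 0 := by
      intro A
      by_cases hA : A = ∅
      · subst hA
        rw [if_pos rfl]
        have hMA : MAux (∅ : Finset (Fin N)) = Finset.univ := by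
          simp [MAux]
        rw [hMA]
        have hfib : ∀ i ∈ (Finset.univ : Finset (Fin N)),
            (∑ s : Fin N → Y,
              if Finset.univ.filter (fun j => R (s j) = 1) = ∅ ∧ s i = y
              then ∏ j, π (s j) else 0) = π y * p ^ (N - 1) := by
          intro i _
          rw [fiber_sum π R hR y ∅ i (iff_of_false (Finset.notMem_empty i) hRy1)]
          have h1 : ((Finset.univ.erase i).filter
              (fun j => j ∈ (∅ : Finset (Fin N)))).card = 0 := by
            simp
          have h2 : ((Finset.univ.erase i).filter
              (fun j => ¬ j ∈ (∅ : Finset (Fin N)))).card = N - 1 := by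
            simp [Finset.card_erase_of_mem, Finset.card_univ]
          rw [h1, h2, ← hp, pow_zero]
          ring
        rw [Finset.sum_congr rfl hfib, Finset.sum_const, nsmul_eq_mul]
        field_simp
      · rw [if_neg hA]
        have hAne : A.Nonempty := Finset.nonempty_iff_ne_empty.mpr hA
        have hMA : MAux A = A := by simp [MAux, hAne]
        rw [hMA]
        have hz : ∀ i ∈ A,
            (∑ s : Fin N → Y,
              if Finset.univ.filter (fun j => R (s j) = 1) = A ∧ s i = y
              then ∏ j, π (s j) else 0) = 0 := by
          intro i hi
          exact fiber_zero π R y A i (fun h => hRy1 (h.mp hi))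
        rw [Finset.sum_eq_zero hz, zero_div]
    rw [Finset.sum_congr rfl (fun A _ => termA A)]
    rw [Finset.sum_ite_eq' Finset.univ (∅ : Finset (Fin N))
        (fun _ => π y * p ^ (N - 1))]
    simp
  · -- case R y = 1
    rw [if_neg hRy]
    have hRy1 : R y = 1 := (hR y).resolve_left hRy
    have hq0 : (1 : ℝ) - p ≠ 0 := by linarith
    have termA : ∀ A : Finset (Fin N),
        (∑ i ∈ MAux A, ∑ s : Fin N → Y,
          if Finset.univ.filter (fun j => R (s j) = 1) = A ∧ s i = y
          then ∏ j, π (s j) else 0) / ((MAux A).card : ℝ)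
        = if A.Nonempty then π y * (1 - p) ^ (A.card - 1) * p ^ (N - A.card) else 0 := by
      intro A
      by_cases hA : A.Nonempty
      · rw [if_pos hA]
        have hMA : MAux A = A := by simp [MAux, hA]
        rw [hMA]
        have hcard0 : A.card ≠ 0 := hA.card_pos.ne'
        have hcard0' : ((A.card : ℝ)) ≠ 0 := Nat.cast_ne_zero.mpr hcard0
        have hfib : ∀ i ∈ A,
            (∑ s : Fin N → Y,
              if Finset.univ.filter (fun j => R (s j) = 1) = A ∧ s i = y
              then ∏ j, π (s j) else 0)
            = π y * (1 - p) ^ (A.card - 1) * p ^ (N - A.card) := by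
          intro i hi
          rw [fiber_sum π R hR y A i (iff_of_true hi hRy1)]
          have h1 : (Finset.univ.erase i).filter (fun j => j ∈ A) = A.erase i := by
            ext j
            simp only [Finset.mem_filter, Finset.mem_erase, Finset.mem_univ, true_and,
              and_true, and_comm]
          have h1c : ((Finset.univ.erase i).filter (fun j => j ∈ A)).card = A.card - 1 := by
            rw [h1, Finset.card_erase_of_mem hi]
          have h2c : ((Finset.univ.erase i).filter (fun j => ¬ j ∈ A)).card = N - A.card := by
            have he : (Finset.univ.erase i).filter (fun j => ¬ j ∈ A)
                = Finset.univ.filter (fun j => ¬ j ∈ A) := by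
              ext j
              constructor
              · intro hj
                exact Finset.mem_filter.mpr ⟨Finset.mem_univ j, (Finset.mem_filter.mp hj).2⟩
              · intro hj
                have hjA : ¬ j ∈ A := (Finset.mem_filter.mp hj).2
                refine Finset.mem_filter.mpr
                  ⟨Finset.mem_erase.mpr ⟨?_, Finset.mem_univ j⟩, hjA⟩
                rintro rfl
                exact hjA hi
            have hpart := Finset.card_filter_add_card_filter_not
              (s := (Finset.univ : Finset (Fin N))) (p := fun j => j ∈ A)
            have hmem : Finset.univ.filter (fun j => j ∈ A) = A := by
              ext j; simp
            rw [hmem, Finset.card_univ, Fintype.card_fin] at hpart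
            rw [he]
            omega
          rw [h1c, h2c, hq, ← hp]
        rw [Finset.sum_congr rfl hfib, Finset.sum_const, nsmul_eq_mul]
        field_simp
      · rw [if_neg hA]
        have hAe : A = ∅ := Finset.not_nonempty_iff_eq_empty.mp hA
        subst hAe
        have hMA : MAux (∅ : Finset (Fin N)) = Finset.univ := by simp [MAux]
        rw [hMA]
        have hz : ∀ i ∈ (Finset.univ : Finset (Fin N)),
            (∑ s : Fin N → Y,
              if Finset.univ.filter (fun j => R (s j) = 1) = ∅ ∧ s i = y
              then ∏ j, π (s j) else 0) = 0 := by
          intro i _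
          exact fiber_zero π R y ∅ i (fun h => Finset.notMem_empty i (h.mpr hRy1))
        rw [Finset.sum_eq_zero hz, zero_div]
    rw [Finset.sum_congr rfl (fun A _ => termA A)]
    -- now compute the binomial-type sum
    have hbin : ∑ A : Finset (Fin N), (1 - p) ^ A.card * p ^ (N - A.card) = 1 := by
      have h := Finset.prod_add (fun _ : Fin N => (1 : ℝ) - p) (fun _ => p) Finset.univ
      simp only [sub_add_cancel, Finset.prod_const, one_pow, Finset.prod_const,
        Finset.powerset_univ] at h
      have h2 : ∀ A : Finset (Fin N), (Finset.univ \ A).card = N - A.card := by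
        intro A
        rw [Finset.card_sdiff_of_subset (Finset.subset_univ A), Finset.card_univ, Fintype.card_fin]
      calc ∑ A : Finset (Fin N), (1 - p) ^ A.card * p ^ (N - A.card)
          = ∑ A : Finset (Fin N), (1 - p) ^ A.card * p ^ ((Finset.univ \ A).card) := by
            apply Finset.sum_congr rfl
            intro A _
            rw [h2]
        _ = 1 := h.symm
    have hsplit : ∀ A : Finset (Fin N),
        (if A.Nonempty then π y * (1 - p) ^ (A.card - 1) * p ^ (N - A.card) else 0)
        = π y / (1 - p) * ((1 - p) ^ A.card * p ^ (N - A.card)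
            - if A = ∅ then (1 - p) ^ A.card * p ^ (N - A.card) else 0) := by
      intro A
      by_cases hA : A = ∅
      · subst hA
        simp
      · have hAne : A.Nonempty := Finset.nonempty_iff_ne_empty.mpr hA
        rw [if_pos hAne, if_neg hA]
        have hc : A.card ≠ 0 := hAne.card_pos.ne'
        have hpow : (1 - p) ^ A.card = (1 - p) ^ (A.card - 1) * (1 - p) := by
          conv_lhs => rw [show A.card = (A.card - 1) + 1 by omega]
          rw [pow_succ]
        rw [hpow]
        field_simp
        ring
    rw [Finset.sum_congr rfl (fun A _ => hsplit A)]
    rw [← Finset.mul_sum, Finset.sum_sub_distrib, hbin]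
    rw [Finset.sum_ite_eq' Finset.univ (∅ : Finset (Fin N))
        (fun A => (1 - p) ^ A.card * p ^ (N - A.card))]
    simp only [Finset.mem_univ, if_true, Finset.card_empty, pow_zero, one_mul, Nat.sub_zero]
    field_simp
end

section
/- With Y a finite type, a differentiable parameterized family θ ↦ π_θ of positive pmfs on Y, a kernel w : Y × Y → ℝ, and λ > 0, define Q_θ(y) = ∑_{y'} π_θ(y')·w(y,y'), Z_θ = ∑_y π_θ(y)·exp(λ·Q_θ(y)), π_bon,θ(y) = π_θ(y)·exp(λ·Q_θ(y))/Z_θ, and ∇_θ f(y;θ) = ∇_θ log π_θ(y) + λ·∑_{y'} π_θ(y')·∇_θ log π_θ(y')·w(y,y'). Then the gradient of the log-partition function satisfies ∇_θ log Z_θ = ∑_y π_bon,θ(y)·∇_θ f(y;θ). -/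
/-- **Gradient of the log-partition function of the variational Best-of-N policy.**
For a differentiable parameterized family `θ ↦ π θ` of positive pmfs on a finite type `Y`,
a kernel `w`, and `λ > 0`, with `Q θ y = ∑ y', π θ y' * w y y'`,
`Z θ = ∑ y, π θ y * exp (λ * Q θ y)`, `π_bon θ y = π θ y * exp (λ * Q θ y) / Z θ`, and
`∇f(y;θ) = ∇ log π θ y + λ • ∑ y', (π θ y' * w y y') • ∇ log π θ y'`, we have
`∇ log Z θ = ∑ y, π_bon θ y • ∇f(y;θ)`. -/
theorem stmt_4 {Y : Type*} [Fintype Y] {d : ℕ}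
    (π : (Fin d → ℝ) → Y → ℝ)
    (hpos : ∀ θ y, 0 < π θ y) (hsum : ∀ θ, ∑ y, π θ y = 1)
    (hdiff : ∀ y, Differentiable ℝ (fun θ => π θ y))
    (w : Y → Y → ℝ) (lam : ℝ) (hlam : 0 < lam)
    (Q : (Fin d → ℝ) → Y → ℝ)
    (hQ : ∀ θ y, Q θ y = ∑ y', π θ y' * w y y')
    (Z : (Fin d → ℝ) → ℝ)
    (hZ : ∀ θ, Z θ = ∑ y, π θ y * Real.exp (lam * Q θ y))
    (πbon : (Fin d → ℝ) → Y → ℝ)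
    (hbon : ∀ θ y, πbon θ y = π θ y * Real.exp (lam * Q θ y) / Z θ)
    (gradf : Y → (Fin d → ℝ) → (Fin d → ℝ) →L[ℝ] ℝ)
    (hgradf : ∀ y θ, gradf y θ =
      fderiv ℝ (fun t => Real.log (π t y)) θ
        + lam • ∑ y', (π θ y' * w y y') • fderiv ℝ (fun t => Real.log (π t y')) θ)
    (θ : Fin d → ℝ) :
    fderiv ℝ (fun t => Real.log (Z t)) θ = ∑ y, πbon θ y • gradf y θ := by
  classical
  set D : Y → (Fin d → ℝ) →L[ℝ] ℝ := fun y => fderiv ℝ (fun t => π t y) θ with hD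
  have hπne : ∀ y, π θ y ≠ 0 := fun y => (hpos θ y).ne'
  have huniv : (Finset.univ : Finset Y).Nonempty := by
    by_contra h
    rw [Finset.not_nonempty_iff_eq_empty] at h
    have := hsum θ
    rw [h] at this
    simp at this
  have hZpos : 0 < Z θ := by
    rw [hZ]
    exact Finset.sum_pos (fun y _ => mul_pos (hpos θ y) (Real.exp_pos _)) huniv
  have hDQ : ∀ y, HasFDerivAt (fun t => Q t y) (∑ y', w y y' • D y') θ := by
    intro y
    simp only [hQ]
    exact HasFDerivAt.fun_sum fun y' _ => ((hdiff y' θ).hasFDerivAt.mul_const (w y y'))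
  have hE : ∀ y, HasFDerivAt (fun t => Real.exp (lam * Q t y))
      ((lam * Real.exp (lam * Q θ y)) • ∑ y', w y y' • D y') θ := by
    intro y
    have := ((hDQ y).const_mul lam).exp
    simpa [smul_smul, mul_comm] using this
  have hZ' : HasFDerivAt Z (∑ y, (Real.exp (lam * Q θ y) • D y
      + (π θ y * (lam * Real.exp (lam * Q θ y))) • ∑ y', w y y' • D y')) θ := by
    have hZfun : Z = fun t => ∑ y, π t y * Real.exp (lam * Q t y) := funext hZ
    rw [hZfun]
    refine HasFDerivAt.fun_sum fun y _ => ?_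
    have := (hdiff y θ).hasFDerivAt.fun_mul (hE y)
    simpa [smul_smul, add_comm] using this
  have hlog : fderiv ℝ (fun t => Real.log (Z t)) θ
      = (Z θ)⁻¹ • (∑ y, (Real.exp (lam * Q θ y) • D y
      + (π θ y * (lam * Real.exp (lam * Q θ y))) • ∑ y', w y y' • D y')) :=
    (hZ'.log hZpos.ne').fderiv
  have hlogπ : ∀ y, fderiv ℝ (fun t => Real.log (π t y)) θ = (π θ y)⁻¹ • D y :=
    fun y => ((hdiff y θ).hasFDerivAt.log (hπne y)).fderiv
  rw [hlog, Finset.smul_sum]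
  refine Finset.sum_congr rfl fun y _ => ?_
  rw [hbon, hgradf]
  simp only [hlogπ]
  have hinner : (∑ y', (π θ y' * w y y') • (π θ y')⁻¹ • D y') = ∑ y', w y y' • D y' := by
    refine Finset.sum_congr rfl fun y' _ => ?_
    rw [smul_smul, mul_comm (π θ y') (w y y'), mul_assoc, mul_inv_cancel₀ (hπne y'), mul_one]
  rw [hinner]
  match_scalars
  · field_simp [hπne y, hZpos.ne']
  · field_simp [hπne y, hZpos.ne']
end

section
/- With Y a finite type, a differentiable parameterized family θ ↦ π_θ of positive pmfs on Y, a kernel w : Y × Y → ℝ, and λ > 0, define Q_θ(y) = ∑_{y'} π_θ(y')·w(y,y'), Z_θ = ∑_y π_θ(y)·exp(λ·Q_θ(y)), π_bon,θ(y) = π_θ(y)·exp(λ·Q_θ(y))/Z_θ, and ∇_θ f(y;θ) = ∇_θ log π_θ(y) + λ·∑_{y'} π_θ(y')·∇_θ log π_θ(y')·w(y,y'). Then for every y ∈ Y, ∇_θ log π_bon,θ(y) = ∇_θ f(y;θ) − ∑_{y''} π_bon,θ(y'')·∇_θ f(y'';θ). -/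
/-- **Gradient of the log-likelihood of the variational Best-of-N policy.**
For a differentiable parameterized family `θ ↦ π θ` of positive pmfs on a finite type `Y`,
a kernel `w`, and `λ > 0`, with `Q θ y = ∑ y', π θ y' * w y y'`,
`Z θ = ∑ y, π θ y * exp (λ * Q θ y)`, `π_bon θ y = π θ y * exp (λ * Q θ y) / Z θ`, and
`∇f(y;θ) = ∇ log π θ y + λ • ∑ y', (π θ y' * w y y') • ∇ log π θ y'`, we have, for every `y`,
`∇ log π_bon θ y = ∇f(y;θ) − ∑ y'', π_bon θ y'' • ∇f(y'';θ)`. -/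
theorem stmt_5 {Y : Type*} [Fintype Y] {d : ℕ}
    (π : (Fin d → ℝ) → Y → ℝ)
    (hpos : ∀ θ y, 0 < π θ y) (hsum : ∀ θ, ∑ y, π θ y = 1)
    (hdiff : ∀ y, Differentiable ℝ (fun θ => π θ y))
    (w : Y → Y → ℝ) (lam : ℝ) (hlam : 0 < lam)
    (Q : (Fin d → ℝ) → Y → ℝ)
    (hQ : ∀ θ y, Q θ y = ∑ y', π θ y' * w y y')
    (Z : (Fin d → ℝ) → ℝ)
    (hZ : ∀ θ, Z θ = ∑ y, π θ y * Real.exp (lam * Q θ y))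
    (πbon : (Fin d → ℝ) → Y → ℝ)
    (hbon : ∀ θ y, πbon θ y = π θ y * Real.exp (lam * Q θ y) / Z θ)
    (gradf : Y → (Fin d → ℝ) → (Fin d → ℝ) →L[ℝ] ℝ)
    (hgradf : ∀ y θ, gradf y θ =
      fderiv ℝ (fun t => Real.log (π t y)) θ
        + lam • ∑ y', (π θ y' * w y y') • fderiv ℝ (fun t => Real.log (π t y')) θ)
    (θ : Fin d → ℝ) :
    ∀ y, fderiv ℝ (fun t => Real.log (πbon t y)) θ
      = gradf y θ - ∑ y'', πbon θ y'' • gradf y'' θ := by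
  have hne : Nonempty Y := by
    by_contra h
    rw [not_nonempty_iff] at h
    have := hsum θ
    simp at this
  have hπ0 : ∀ t y, π t y ≠ 0 := fun t y => (hpos t y).ne'
  set Dπ : Y → (Fin d → ℝ) →L[ℝ] ℝ := fun y => fderiv ℝ (fun t => π t y) θ with hDπ
  have hπ : ∀ y, HasFDerivAt (fun t => π t y) (Dπ y) θ := fun y => (hdiff y θ).hasFDerivAt
  have hZpos : ∀ t, 0 < Z t := by
    intro t
    rw [hZ]
    exact Finset.sum_pos (fun y _ => mul_pos (hpos t y) (Real.exp_pos _)) Finset.univ_nonempty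
  set DQ : Y → (Fin d → ℝ) →L[ℝ] ℝ := fun y => ∑ y', w y y' • Dπ y' with hDQ
  have hQd : ∀ y, HasFDerivAt (fun t => Q t y) (DQ y) θ := by
    intro y
    have h1 : (fun t => Q t y) = fun t => ∑ y', π t y' * w y y' := funext fun t => hQ t y
    rw [h1, hDQ]
    exact HasFDerivAt.fun_sum (fun y' _ => (hπ y').mul_const (w y y'))
  have hE : ∀ y, HasFDerivAt (fun t => Real.exp (lam * Q t y))
      (Real.exp (lam * Q θ y) • (lam • DQ y)) θ := fun y => ((hQd y).const_mul lam).exp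
  set DZ : (Fin d → ℝ) →L[ℝ] ℝ :=
    ∑ y, (π θ y • (Real.exp (lam * Q θ y) • (lam • DQ y)) + Real.exp (lam * Q θ y) • Dπ y)
    with hDZ
  have hZd : HasFDerivAt Z DZ θ := by
    have h1 : Z = fun t => ∑ y, π t y * Real.exp (lam * Q t y) := funext hZ
    rw [h1, hDZ]
    exact HasFDerivAt.fun_sum (fun y _ => (hπ y).mul (hE y))
  have hLog : ∀ y, fderiv ℝ (fun t => Real.log (π t y)) θ = (π θ y)⁻¹ • Dπ y :=
    fun y => ((hπ y).log (hπ0 θ y)).fderiv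
  have hgrad_eq : ∀ y, gradf y θ = (π θ y)⁻¹ • Dπ y + lam • DQ y := by
    intro y
    rw [hgradf, hLog, hDQ]
    congr 1
    congr 1
    apply Finset.sum_congr rfl
    intro x _
    rw [hLog, smul_smul]
    congr 1
    field_simp [hπ0 θ x]
  intro y
  have hbon_log : (fun t => Real.log (πbon t y))
      = fun t => Real.log (π t y) + lam * Q t y - Real.log (Z t) := by
    funext t
    rw [hbon, Real.log_div (mul_ne_zero (hπ0 t y) (Real.exp_ne_zero _)) (hZpos t).ne',
      Real.log_mul (hπ0 t y) (Real.exp_ne_zero _), Real.log_exp]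
  have hmain : HasFDerivAt (fun t => Real.log (πbon t y))
      (((π θ y)⁻¹ • Dπ y + lam • DQ y) - (Z θ)⁻¹ • DZ) θ := by
    rw [hbon_log]
    exact (((hπ y).log (hπ0 θ y)).add ((hQd y).const_mul lam)).sub (hZd.log (hZpos θ).ne')
  rw [hmain.fderiv, hgrad_eq y]
  congr 1
  rw [hDZ, Finset.smul_sum]
  symm
  apply Finset.sum_congr rfl
  intro x _
  rw [hgrad_eq x, hbon]
  have hx := hπ0 θ x
  have hz := (hZpos θ).ne'
  match_scalars <;> field_simp <;> ring
end

section
/- (BoN-SFT, Lemma 1) Let X and Y be finite types, D a pmf on X × Y with marginal D_X on X, θ ↦ π_θ(·|x) a differentiable parameterized family of positive pmfs on Y for each x ∈ X, r : X × Y → ℝ a verifier score, σ(t) = 1/(1 + exp(−t)) the logistic sigmoid, and λ > 0. Define Q_θ(x,y) = ∑_{y'} π_θ(y'|x)·σ(r(x,y) − r(x,y')), Z_θ(x) = ∑_y π_θ(y|x)·exp(λ·Q_θ(x,y)), π_bon,θ(y|x) = π_θ(y|x)·exp(λ·Q_θ(x,y))/Z_θ(x), and ∇_θ f(x,y;θ)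 = ∇_θ log π_θ(y|x) + λ·∑_{y'} π_θ(y'|x)·∇_θ log π_θ(y'|x)·σ(r(x,y) − r(x,y')). Then the gradient with respect to θ of L(θ) = ∑_{(x,y)} D(x,y)·log π_bon,θ(y|x) equals ∑_{(x,y)} D(x,y)·∇_θ f(x,y;θ) − ∑_x D_X(x)·∑_y π_bon,θ(y|x)·∇_θ f(x,y;θ). -/
/-- **BoN-SFT gradient (Lemma 1).**
With `X, Y` finite, `D` a pmf on `X × Y` with marginal `DX`, a differentiable family of
conditional positive pmfs `π θ x`, verifier score `r`, sigmoid `σ(t) = 1/(1 + exp(−t))`,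
`λ > 0`, `Q θ x y = ∑ y', π θ x y' * σ(r x y − r x y')`,
`Z θ x = ∑ y, π θ x y * exp (λ * Q θ x y)`, `π_bon θ x y = π θ x y * exp (λ * Q θ x y) / Z θ x`,
and `∇f(x,y;θ) = ∇ log π θ x y + λ • ∑ y', (π θ x y' * σ(r x y − r x y')) • ∇ log π θ x y'`:
the gradient of `L(θ) = ∑_{(x,y)} D(x,y) * log π_bon θ x y` equals
`∑_{(x,y)} D(x,y) • ∇f(x,y;θ) − ∑ x, DX x • ∑ y, π_bon θ x y • ∇f(x,y;θ)`. -/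
theorem stmt_6 {X Y : Type*} [Fintype X] [Fintype Y] {d : ℕ}
    (D : X × Y → ℝ) (hDnn : ∀ q, 0 ≤ D q) (hDsum : ∑ q, D q = 1)
    (DX : X → ℝ) (hDX : ∀ x, DX x = ∑ y, D (x, y))
    (π : (Fin d → ℝ) → X → Y → ℝ)
    (hpos : ∀ θ x y, 0 < π θ x y) (hsum : ∀ θ x, ∑ y, π θ x y = 1)
    (hdiff : ∀ x y, Differentiable ℝ (fun θ => π θ x y))
    (r : X → Y → ℝ)
    (sig : ℝ → ℝ) (hsig : ∀ t, sig t = 1 / (1 + Real.exp (-t)))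
    (lam : ℝ) (hlam : 0 < lam)
    (Q : (Fin d → ℝ) → X → Y → ℝ)
    (hQ : ∀ θ x y, Q θ x y = ∑ y', π θ x y' * sig (r x y - r x y'))
    (Z : (Fin d → ℝ) → X → ℝ)
    (hZ : ∀ θ x, Z θ x = ∑ y, π θ x y * Real.exp (lam * Q θ x y))
    (πbon : (Fin d → ℝ) → X → Y → ℝ)
    (hbon : ∀ θ x y, πbon θ x y = π θ x y * Real.exp (lam * Q θ x y) / Z θ x)
    (gradf : X → Y → (Fin d → ℝ) → (Fin d → ℝ) →L[ℝ] ℝ)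
    (hgradf : ∀ x y θ, gradf x y θ =
      fderiv ℝ (fun t => Real.log (π t x y)) θ
        + lam • ∑ y', (π θ x y' * sig (r x y - r x y')) •
            fderiv ℝ (fun t => Real.log (π t x y')) θ)
    (θ : Fin d → ℝ) :
    fderiv ℝ (fun t => ∑ q : X × Y, D q * Real.log (πbon t q.1 q.2)) θ
      = ∑ q : X × Y, D q • gradf q.1 q.2 θ
        - ∑ x, DX x • ∑ y, πbon θ x y • gradf x y θ := by
  classical
  have hdπ : ∀ x y, DifferentiableAt ℝ (fun t => π t x y) θ := fun x y => (hdiff x y) θ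
  have hπne : ∀ t x y, π t x y ≠ 0 := fun t x y => (hpos t x y).ne'
  -- g is the "tilted" log-density (up to normalization)
  set g : X → Y → (Fin d → ℝ) → ℝ :=
    fun x y t => Real.log (π t x y) + lam * Q t x y with hgdef
  -- Q rewritten
  have hQfun : ∀ x y, (fun t => Q t x y) = fun t => ∑ y', π t x y' * sig (r x y - r x y') := by
    intro x y; funext t; exact hQ t x y
  have hQdiff : ∀ x y, DifferentiableAt ℝ (fun t => Q t x y) θ := by
    intro x y
    rw [hQfun x y]
    exact DifferentiableAt.fun_sum fun y' _ => (hdπ x y').mul_const _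
  have hfQ : ∀ x y, fderiv ℝ (fun t => Q t x y) θ
      = ∑ y', sig (r x y - r x y') • fderiv ℝ (fun t => π t x y') θ := by
    intro x y
    rw [hQfun x y, fderiv_fun_sum (fun y' _ => (hdπ x y').mul_const _)]
    exact Finset.sum_congr rfl fun y' _ => fderiv_mul_const (hdπ x y') _
  -- derivative of log π
  have hflog : ∀ x y, fderiv ℝ (fun t => Real.log (π t x y)) θ
      = (π θ x y)⁻¹ • fderiv ℝ (fun t => π t x y) θ :=
    fun x y => ((hdπ x y).hasFDerivAt.log (hπne θ x y)).fderiv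
  have hlogdiff : ∀ x y, DifferentiableAt ℝ (fun t => Real.log (π t x y)) θ :=
    fun x y => (hdπ x y).log (hπne θ x y)
  have hgdiff : ∀ x y, DifferentiableAt ℝ (g x y) θ :=
    fun x y => (hlogdiff x y).add ((hQdiff x y).const_mul lam)
  -- gradf is the derivative of g
  have hgrad : ∀ x y, gradf x y θ = fderiv ℝ (g x y) θ := by
    intro x y
    have h1 : fderiv ℝ (g x y) θ
        = fderiv ℝ (fun t => Real.log (π t x y)) θ + lam • fderiv ℝ (fun t => Q t x y) θ := by
      rw [hgdef]
      rw [fderiv_fun_add (hlogdiff x y) ((hQdiff x y).const_mul lam),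
        fderiv_const_mul (hQdiff x y)]
    rw [h1, hfQ, hgradf]
    congr 1
    congr 1
    refine Finset.sum_congr rfl fun y' _ => ?_
    rw [hflog x y', smul_smul]
    congr 1
    field_simp
    rw [mul_comm]
    exact mul_div_cancel_right₀ _ (hπne θ x y')
  -- exp of g
  have hexp : ∀ t x y, Real.exp (g x y t) = π t x y * Real.exp (lam * Q t x y) := by
    intro t x y
    rw [hgdef]
    simp only []
    rw [Real.exp_add, Real.exp_log (hpos t x y)]
  -- Z positivity
  have hZpos : ∀ t x, 0 < Z t x := by
    intro t x
    have hYne : (Finset.univ : Finset Y).Nonempty := by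
      by_contra h
      rw [Finset.not_nonempty_iff_eq_empty] at h
      have h1 := hsum t x
      rw [h] at h1
      simp at h1
    rw [hZ]
    exact Finset.sum_pos (fun y _ => mul_pos (hpos t x y) (Real.exp_pos _)) hYne
  have hZfun : ∀ x, (fun t => Z t x) = fun t => ∑ y, Real.exp (g x y t) := by
    intro x; funext t
    rw [hZ]
    exact Finset.sum_congr rfl fun y _ => (hexp t x y).symm
  have hZdiff : ∀ x, DifferentiableAt ℝ (fun t => Z t x) θ := by
    intro x
    rw [hZfun x]
    exact DifferentiableAt.fun_sum fun y _ => (hgdiff x y).exp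
  have hfZ : ∀ x, fderiv ℝ (fun t => Z t x) θ
      = ∑ y, Real.exp (g x y θ) • fderiv ℝ (g x y) θ := by
    intro x
    rw [hZfun x, fderiv_fun_sum (fun y _ => (hgdiff x y).exp)]
    exact Finset.sum_congr rfl fun y _ => ((hgdiff x y).hasFDerivAt.exp).fderiv
  -- πbon as exp g / Z
  have hbon' : ∀ t x y, πbon t x y = Real.exp (g x y t) / Z t x := by
    intro t x y; rw [hbon, hexp]
  -- log of Z differentiability and derivative
  have hlogZdiff : ∀ x, DifferentiableAt ℝ (fun t => Real.log (Z t x)) θ :=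
    fun x => (hZdiff x).log (hZpos θ x).ne'
  have hflogZ : ∀ x, fderiv ℝ (fun t => Real.log (Z t x)) θ
      = ∑ y, πbon θ x y • gradf x y θ := by
    intro x
    rw [((hZdiff x).hasFDerivAt.log (hZpos θ x).ne').fderiv, hfZ, Finset.smul_sum]
    refine Finset.sum_congr rfl fun y _ => ?_
    rw [smul_smul, hbon' θ x y, hgrad]
    congr 1
    field_simp
  -- log πbon
  have hlogbon : ∀ t x y, Real.log (πbon t x y) = g x y t - Real.log (Z t x) := by
    intro t x y
    rw [hbon' t x y, Real.log_div (Real.exp_ne_zero _) (hZpos t x).ne', Real.log_exp]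
  -- the summand functions
  have hLfun : (fun t => ∑ q : X × Y, D q * Real.log (πbon t q.1 q.2))
      = fun t => ∑ q : X × Y, D q * (g q.1 q.2 t - Real.log (Z t q.1)) := by
    funext t
    exact Finset.sum_congr rfl fun q _ => by rw [hlogbon]
  have hsdiff : ∀ q : X × Y, DifferentiableAt ℝ
      (fun t => D q * (g q.1 q.2 t - Real.log (Z t q.1))) θ :=
    fun q => ((hgdiff q.1 q.2).sub (hlogZdiff q.1)).const_mul _
  rw [hLfun, fderiv_fun_sum (fun q _ => hsdiff q)]
  have hterm : ∀ q : X × Y, fderiv ℝ (fun t => D q * (g q.1 q.2 t - Real.log (Z t q.1))) θ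
      = D q • gradf q.1 q.2 θ - D q • ∑ y, πbon θ q.1 y • gradf q.1 y θ := by
    intro q
    rw [fderiv_const_mul ((hgdiff q.1 q.2).fun_sub (hlogZdiff q.1)),
      fderiv_fun_sub (hgdiff q.1 q.2) (hlogZdiff q.1), hflogZ, hgrad, smul_sub]
  rw [Finset.sum_congr rfl fun q _ => hterm q, Finset.sum_sub_distrib]
  congr 1
  rw [Fintype.sum_prod_type]
  refine Finset.sum_congr rfl fun x _ => ?_
  rw [hDX, Finset.sum_smul]
end

section
/- (BoN-RL, Lemma 2) Let X and Y be finite types, D a pmf on X, θ ↦ π_θ(·|x) a differentiable parameterized family of positive pmfs on Y for each x ∈ X, r : X × Y → ℝ a verifier score, R : X × Y → ℝ an environment reward, and λ > 0. Define Q_θ(x,y) = ∑_{y'} π_θ(y'|x)·𝟙{r(x,y) ≥ r(x,y')}, Z_θ(x) = ∑_y π_θ(y|x)·exp(λ·Q_θ(x,y)), π_bon,θ(y|x) = π_θ(y|x)·exp(λ·Q_θ(x,y))/Z_θ(x), J(θ) = ∑_x D(x)·∑_y π_bon,θ(y|x)·R(x,y), and the baseline b_θ(x) = ∑_y π_bon,θ(y|x)·R(x,y).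 Then ∇_θ J(θ) = ∑_x D(x)·∑_y π_bon,θ(y|x)·∇_θ log π_θ(y|x)·(R(x,y) − b_θ(x)) − λ·∑_x D(x)·∑_y π_bon,θ(y|x)·∑_{y'} π_θ(y'|x)·∇_θ log π_θ(y'|x)·𝟙{r(x,y) < r(x,y')}·(R(x,y) − b_θ(x)). -/
open scoped Classical

/-- **BoN-RL gradient (Lemma 2).**
With `X, Y` finite, `D` a pmf on `X`, a differentiable family of conditional positive pmfs
`π θ x`, verifier score `r`, environment reward `R`, `λ > 0`,
`Q θ x y = ∑ y', π θ x y' * 𝟙{r x y' ≤ r x y}`, `Z θ x = ∑ y, π θ x y * exp (λ * Q θ x y)`,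
`π_bon θ x y = π θ x y * exp (λ * Q θ x y) / Z θ x`,
`J(θ) = ∑ x, D x * ∑ y, π_bon θ x y * R x y`, and baseline
`b θ x = ∑ y, π_bon θ x y * R x y`, the gradient of `J` equals
`∑ x, D x • ∑ y, (π_bon θ x y * (R x y − b θ x)) • ∇ log π θ x y
  − λ • ∑ x, D x • ∑ y, ∑ y', (π_bon θ x y * π θ x y' * 𝟙{r x y < r x y'} * (R x y − b θ x))
      • ∇ log π θ x y'`. -/
theorem stmt_7 {X Y : Type*} [Fintype X] [Fintype Y] {d : ℕ}
    (D : X → ℝ) (hDnn : ∀ x, 0 ≤ D x) (hDsum : ∑ x, D x = 1)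
    (π : (Fin d → ℝ) → X → Y → ℝ)
    (hpos : ∀ θ x y, 0 < π θ x y) (hsum : ∀ θ x, ∑ y, π θ x y = 1)
    (hdiff : ∀ x y, Differentiable ℝ (fun θ => π θ x y))
    (r : X → Y → ℝ) (R : X → Y → ℝ)
    (lam : ℝ) (hlam : 0 < lam)
    (Q : (Fin d → ℝ) → X → Y → ℝ)
    (hQ : ∀ θ x y, Q θ x y = ∑ y', π θ x y' * (if r x y' ≤ r x y then (1 : ℝ) else 0))
    (Z : (Fin d → ℝ) → X → ℝ)
    (hZ : ∀ θ x, Z θ x = ∑ y, π θ x y * Real.exp (lam * Q θ x y))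
    (πbon : (Fin d → ℝ) → X → Y → ℝ)
    (hbon : ∀ θ x y, πbon θ x y = π θ x y * Real.exp (lam * Q θ x y) / Z θ x)
    (b : (Fin d → ℝ) → X → ℝ)
    (hb : ∀ θ x, b θ x = ∑ y, πbon θ x y * R x y)
    (θ : Fin d → ℝ) :
    fderiv ℝ (fun t => ∑ x, D x * ∑ y, πbon t x y * R x y) θ
      = (∑ x, D x • ∑ y, (πbon θ x y * (R x y - b θ x)) •
            fderiv ℝ (fun t => Real.log (π t x y)) θ)
        - lam • ∑ x, D x • ∑ y, ∑ y',
            (πbon θ x y * π θ x y' * (if r x y < r x y' then (1 : ℝ) else 0)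
              * (R x y - b θ x)) • fderiv ℝ (fun t => Real.log (π t x y')) θ := by
  classical
  have key : ∀ x : X, HasFDerivAt (fun t => ∑ y, πbon t x y * R x y)
      ((∑ y, (πbon θ x y * (R x y - b θ x)) •
            fderiv ℝ (fun t => Real.log (π t x y)) θ)
        - lam • ∑ y, ∑ y',
            (πbon θ x y * π θ x y' * (if r x y < r x y' then (1 : ℝ) else 0)
              * (R x y - b θ x)) • fderiv ℝ (fun t => Real.log (π t x y')) θ) θ := by
    intro x
    have hPne : ∀ y, π θ x y ≠ 0 := fun y => (hpos θ x y).ne'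
    set L : Y → ((Fin d → ℝ) →L[ℝ] ℝ) := fun y => fderiv ℝ (fun t => π t x y) θ with hLdef
    have hL : ∀ y, HasFDerivAt (fun t => π t x y) (L y) θ := fun y =>
      (hdiff x y θ).hasFDerivAt
    have hlog : ∀ y, fderiv ℝ (fun t => Real.log (π t x y)) θ = (π θ x y)⁻¹ • L y :=
      fun y => ((hL y).log (hPne y)).fderiv
    have hLsum : ∑ y, L y = 0 := by
      have h1 : HasFDerivAt (fun t => ∑ y, π t x y) (∑ y, L y) θ :=
        HasFDerivAt.fun_sum fun y _ => hL y
      have h2 : (fun t : Fin d → ℝ => ∑ y, π t x y) = fun _ => (1 : ℝ) :=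
        funext fun t => hsum t x
      rw [h2] at h1
      exact h1.unique (hasFDerivAt_const 1 θ)
    set Q' : Y → ((Fin d → ℝ) →L[ℝ] ℝ) :=
      fun y => ∑ y', (if r x y' ≤ r x y then (1 : ℝ) else 0) • L y' with hQ'def
    have hQd : ∀ y, HasFDerivAt (fun t => Q t x y) (Q' y) θ := by
      intro y
      have hfe : (fun t => Q t x y)
          = fun t => ∑ y', π t x y' * (if r x y' ≤ r x y then (1 : ℝ) else 0) :=
        funext fun t => hQ t x y
      rw [hfe]
      exact HasFDerivAt.fun_sum fun y' _ => (hL y').mul_const _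
    set g' : Y → ((Fin d → ℝ) →L[ℝ] ℝ) :=
      fun y => π θ x y • (Real.exp (lam * Q θ x y) • (lam • Q' y))
        + Real.exp (lam * Q θ x y) • L y with hg'def
    have hg : ∀ y, HasFDerivAt (fun t => π t x y * Real.exp (lam * Q t x y)) (g' y) θ := by
      intro y
      have he : HasFDerivAt (fun t => Real.exp (lam * Q t x y))
          (Real.exp (lam * Q θ x y) • (lam • Q' y)) θ :=
        HasFDerivAt.exp ((hQd y).const_mul lam)
      exact (hL y).mul he
    have hZpos : 0 < Z θ x := by
      rw [hZ]
      refine Finset.sum_pos (fun y _ => mul_pos (hpos θ x y) (Real.exp_pos _)) ?_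
      rcases (Finset.univ (α := Y)).eq_empty_or_nonempty with h | h
      · exfalso
        have h1 := hsum θ x
        rw [h, Finset.sum_empty] at h1
        norm_num at h1
      · exact h
    have hZd : HasFDerivAt (fun t => Z t x) (∑ y, g' y) θ := by
      have hfe : (fun t => Z t x)
          = fun t => ∑ y, π t x y * Real.exp (lam * Q t x y) := funext fun t => hZ t x
      rw [hfe]
      exact HasFDerivAt.fun_sum fun y _ => hg y
    have hNd : HasFDerivAt (fun t => ∑ y, π t x y * Real.exp (lam * Q t x y) * R x y)
        (∑ y, R x y • g' y) θ :=
      HasFDerivAt.fun_sum fun y _ => (hg y).mul_const _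
    have hinv : HasFDerivAt (fun t => (Z t x)⁻¹)
        ((-((Z θ x) ^ 2)⁻¹) • ∑ y, g' y) θ :=
      (hasDerivAt_inv hZpos.ne').comp_hasFDerivAt θ hZd
    have hfun : (fun t => ∑ y, πbon t x y * R x y)
        = fun t => (∑ y, π t x y * Real.exp (lam * Q t x y) * R x y) * (Z t x)⁻¹ := by
      funext t
      rw [Finset.sum_mul]
      exact Finset.sum_congr rfl fun y _ => by rw [hbon]; ring
    have hkey : HasFDerivAt (fun t => ∑ y, πbon t x y * R x y)
        ((∑ y, π θ x y * Real.exp (lam * Q θ x y) * R x y) •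
            ((-((Z θ x) ^ 2)⁻¹) • ∑ y, g' y)
          + (Z θ x)⁻¹ • ∑ y, R x y • g' y) θ := by
      rw [hfun]
      exact hNd.mul hinv
    have hbx : b θ x = (∑ y, π θ x y * Real.exp (lam * Q θ x y) * R x y) * (Z θ x)⁻¹ := by
      rw [hb, Finset.sum_mul]
      exact Finset.sum_congr rfl fun y _ => by rw [hbon]; ring
    have h2 : ((∑ y, π θ x y * Real.exp (lam * Q θ x y) * R x y) •
            ((-((Z θ x) ^ 2)⁻¹) • ∑ y, g' y)
          + (Z θ x)⁻¹ • ∑ y, R x y • g' y)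
        = (∑ y, (πbon θ x y * (R x y - b θ x)) •
            fderiv ℝ (fun t => Real.log (π t x y)) θ)
          - lam • ∑ y, ∑ y',
            (πbon θ x y * π θ x y' * (if r x y < r x y' then (1 : ℝ) else 0)
              * (R x y - b θ x)) • fderiv ℝ (fun t => Real.log (π t x y')) θ := by
      simp only [hlog]
      apply ContinuousLinearMap.ext
      intro v
      simp only [ContinuousLinearMap.add_apply, ContinuousLinearMap.smul_apply,
        ContinuousLinearMap.sum_apply, ContinuousLinearMap.sub_apply, smul_eq_mul, hg'def,
        hQ'def]
      have hl0 : ∑ y, (L y) v = 0 := by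
        have := congrArg (fun (f : (Fin d → ℝ) →L[ℝ] ℝ) => f v) hLsum
        simpa using this
      have hflip : ∀ y, ∑ y', (if r x y' ≤ r x y then (1 : ℝ) else 0) * (L y') v
          = - ∑ y', (if r x y < r x y' then (1 : ℝ) else 0) * (L y') v := by
        intro y
        have hsplit : ∑ y', ((if r x y' ≤ r x y then (1 : ℝ) else 0) * (L y') v
              + (if r x y < r x y' then (1 : ℝ) else 0) * (L y') v) = ∑ y', (L y') v := by
          refine Finset.sum_congr rfl fun y' _ => ?_
          by_cases h : r x y' ≤ r x y
          · simp [h, not_lt.2 h]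
          · simp [h, not_le.1 h]
        rw [eq_neg_iff_add_eq_zero, ← Finset.sum_add_distrib, hsplit, hl0]
      have hin : ∀ y, ∑ y', (πbon θ x y * π θ x y' * (if r x y < r x y' then (1 : ℝ) else 0)
            * (R x y - b θ x)) * ((π θ x y')⁻¹ * (L y') v)
          = (πbon θ x y * (R x y - b θ x)) *
              ∑ y', (if r x y < r x y' then (1 : ℝ) else 0) * (L y') v := by
        intro y
        rw [Finset.mul_sum]
        refine Finset.sum_congr rfl fun y' _ => ?_
        field_simp [hPne y']
      simp only [hin]
      simp only [hflip]
      conv_lhs => rw [Finset.mul_sum, Finset.mul_sum, Finset.mul_sum,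
        ← Finset.sum_add_distrib]
      conv_rhs => rw [Finset.mul_sum, ← Finset.sum_sub_distrib]
      refine Finset.sum_congr rfl fun y _ => ?_
      rw [hbon θ x y, hbx]
      field_simp [hPne y, hZpos.ne']
      ring
    exact h2 ▸ hkey
  have hJ : HasFDerivAt (fun t => ∑ x, D x * ∑ y, πbon t x y * R x y)
      (∑ x, D x • ((∑ y, (πbon θ x y * (R x y - b θ x)) •
            fderiv ℝ (fun t => Real.log (π t x y)) θ)
        - lam • ∑ y, ∑ y',
            (πbon θ x y * π θ x y' * (if r x y < r x y' then (1 : ℝ) else 0)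
              * (R x y - b θ x)) • fderiv ℝ (fun t => Real.log (π t x y')) θ)) θ :=
    HasFDerivAt.fun_sum fun x _ => (key x).const_mul (D x)
  rw [hJ.fderiv, Finset.smul_sum, ← Finset.sum_sub_distrib]
  refine Finset.sum_congr rfl fun x _ => ?_
  rw [smul_sub, smul_comm]
end

section
/- (BoN-RLB, Lemma 3) Let X and Y be finite types, D a pmf on X, θ ↦ π_θ(·|x) a differentiable parameterized family of positive pmfs on Y for each x ∈ X, R : X × Y → {0,1} a binary reward, and N ≥ 1 an integer. Set p_θ(x) = ∑_{y : R(x,y)=0} π_θ(y|x) and assume 0 < p_θ(x) < 1 for all θ and x. Define the closed-form BoN policy π_bon,θ(y|x) = π_θ(y|x)·p_θ(x)^{N−1} if R(x,y) = 0 and π_bon,θ(y|x) = π_θ(y|x)·(1 − p_θ(x)^N)/(1 − p_θ(x)) if R(x,y) = 1, and the weights g⁺_N(p) = N·p^{N−1}/(1 − p^N) and g⁻(p) = N·p/(1 − p). Then ∇_θ [∑_x D(x)·∑_y π_bon,θ(y|x)·R(x,y)] = ∑_x D(x)·[ g⁺_N(p_θ(x))·∑_{y : R(x,y)=1} π_bon,θ(y|x)·∇_θ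 log π_θ(y|x) + g⁻(p_θ(x))·∑_{y : R(x,y)=0} π_bon,θ(y|x)·∇_θ log π_θ(y|x) ]. -/
open scoped Classical

/-- **BoN-RLB gradient (Lemma 3).**
With `X, Y` finite, `D` a pmf on `X`, a differentiable family of conditional positive pmfs
`π θ x`, a binary reward `R : X × Y → {0,1}`, `N ≥ 1`, failure probability
`p θ x = ∑_{y : R x y = 0} π θ x y ∈ (0,1)`, the closed-form Best-of-N policy
`π_bon θ x y = π θ x y * (p θ x)^(N−1)` if `R x y = 0` and
`π_bon θ x y = π θ x y * (1 − (p θ x)^N)/(1 − p θ x)` if `R x y = 1`, and weights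
`g⁺_N(q) = N * q^(N−1)/(1 − q^N)`, `g⁻(q) = N * q/(1 − q)`:
`∇ ∑ x, D x * ∑ y, π_bon θ x y * R x y
  = ∑ x, D x • (g⁺_N(p θ x) • ∑_{y : R x y = 1} π_bon θ x y • ∇ log π θ x y
      + g⁻(p θ x) • ∑_{y : R x y = 0} π_bon θ x y • ∇ log π θ x y)`. -/
theorem stmt_8 {X Y : Type*} [Fintype X] [Fintype Y] {d : ℕ}
    (D : X → ℝ) (hDnn : ∀ x, 0 ≤ D x) (hDsum : ∑ x, D x = 1)
    (π : (Fin d → ℝ) → X → Y → ℝ)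
    (hpos : ∀ θ x y, 0 < π θ x y) (hsum : ∀ θ x, ∑ y, π θ x y = 1)
    (hdiff : ∀ x y, Differentiable ℝ (fun θ => π θ x y))
    (R : X → Y → ℝ) (hR : ∀ x y, R x y = 0 ∨ R x y = 1)
    (N : ℕ) (hN : 1 ≤ N)
    (p : (Fin d → ℝ) → X → ℝ)
    (hp : ∀ θ x, p θ x = ∑ y ∈ Finset.univ.filter (fun y => R x y = 0), π θ x y)
    (hp01 : ∀ θ x, 0 < p θ x ∧ p θ x < 1)
    (πbon : (Fin d → ℝ) → X → Y → ℝ)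
    (hbon : ∀ θ x y, πbon θ x y =
      if R x y = 0 then π θ x y * (p θ x) ^ (N - 1)
      else π θ x y * (1 - (p θ x) ^ N) / (1 - p θ x))
    (gplus : ℝ → ℝ) (hgplus : ∀ q, gplus q = N * q ^ (N - 1) / (1 - q ^ N))
    (gminus : ℝ → ℝ) (hgminus : ∀ q, gminus q = N * q / (1 - q))
    (θ : Fin d → ℝ) :
    fderiv ℝ (fun t => ∑ x, D x * ∑ y, πbon t x y * R x y) θ
      = ∑ x, D x •
          (gplus (p θ x) • ∑ y ∈ Finset.univ.filter (fun y => R x y = 1),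
              πbon θ x y • fderiv ℝ (fun t => Real.log (π t x y)) θ
            + gminus (p θ x) • ∑ y ∈ Finset.univ.filter (fun y => R x y = 0),
                πbon θ x y • fderiv ℝ (fun t => Real.log (π t x y)) θ) := by

  classical
  have hNne : N ≠ 0 := by omega
  have h1p : ∀ t x, 1 - p t x ≠ 0 := fun t x => by have := (hp01 t x).2; intro h; linarith
  have h1pN : ∀ t x, 1 - p t x ^ N ≠ 0 := fun t x => by
    have h0 := (hp01 t x).1
    have h1 := (hp01 t x).2
    have : p t x ^ N < 1 := pow_lt_one₀ h0.le h1 hNne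
    intro h; linarith
  -- derivative of p
  have hP : ∀ x, HasFDerivAt (fun t => p t x)
      (∑ y ∈ Finset.univ.filter (fun y => R x y = 0), fderiv ℝ (fun t => π t x y) θ) θ := by
    intro x
    have h := HasFDerivAt.fun_sum
      (fun y (_ : y ∈ Finset.univ.filter (fun y => R x y = 0)) => (hdiff x y θ).hasFDerivAt)
    have he : (fun t => p t x)
        = fun t => ∑ y ∈ Finset.univ.filter (fun y => R x y = 0), π t x y :=
      funext fun t => hp t x
    rw [he]; exact h
  have hfilter : ∀ x, Finset.univ.filter (fun y => R x y = 1)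
      = Finset.univ.filter (fun y => ¬ R x y = 0) := by
    intro x
    apply Finset.filter_congr
    intro y _
    rcases hR x y with h | h <;> simp [h]
  have hS1sum : ∀ t x, ∑ y ∈ Finset.univ.filter (fun y => R x y = 1), π t x y = 1 - p t x := by
    intro t x
    have hpart := Finset.sum_filter_add_sum_filter_not Finset.univ (fun y => R x y = 0)
      (fun y => π t x y)
    rw [hsum t x] at hpart
    rw [hfilter x]
    have h2 := hp t x
    linarith
  have hP1 : ∀ x, HasFDerivAt
      (fun t => ∑ y ∈ Finset.univ.filter (fun y => R x y = 1), π t x y)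
      (-(∑ y ∈ Finset.univ.filter (fun y => R x y = 0), fderiv ℝ (fun t => π t x y) θ)) θ := by
    intro x
    have he : (fun t => ∑ y ∈ Finset.univ.filter (fun y => R x y = 1), π t x y)
        = fun t => 1 - p t x := funext fun t => hS1sum t x
    rw [he]
    exact (hP x).const_sub 1
  have hDsumS1 : ∀ x,
      ∑ y ∈ Finset.univ.filter (fun y => R x y = 1), fderiv ℝ (fun t => π t x y) θ
      = -(∑ y ∈ Finset.univ.filter (fun y => R x y = 0), fderiv ℝ (fun t => π t x y) θ) :=
    fun x => (HasFDerivAt.fun_sum (fun y _ => (hdiff x y θ).hasFDerivAt)).unique (hP1 x)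
  have hkey : ∀ t x, ∑ y, πbon t x y * R x y = 1 - p t x ^ N := by
    intro t x
    have h1 : ∑ y, πbon t x y * R x y
        = ∑ y ∈ Finset.univ.filter (fun y => R x y = 1), πbon t x y := by
      rw [Finset.sum_filter]
      apply Finset.sum_congr rfl
      intro y _
      rcases hR x y with h | h <;> simp [h]
    rw [h1]
    have h2 : ∑ y ∈ Finset.univ.filter (fun y => R x y = 1), πbon t x y
        = ∑ y ∈ Finset.univ.filter (fun y => R x y = 1),
            π t x y * (1 - p t x ^ N) / (1 - p t x) := by
      apply Finset.sum_congr rfl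
      intro y hy
      rw [Finset.mem_filter] at hy
      rw [hbon, if_neg (by rw [hy.2]; norm_num)]
    rw [h2, ← Finset.sum_div, ← Finset.sum_mul, hS1sum t x, mul_comm, mul_div_assoc,
      div_self (h1p t x), mul_one]
  have hlog : ∀ x y, fderiv ℝ (fun t => Real.log (π t x y)) θ
      = (π θ x y)⁻¹ • fderiv ℝ (fun t => π t x y) θ := fun x y =>
    (((hdiff x y θ).hasFDerivAt).log (ne_of_gt (hpos θ x y))).fderiv
  have hfun : (fun t => ∑ x, D x * ∑ y, πbon t x y * R x y)
      = fun t => ∑ x, D x * (1 - p t x ^ N) := by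
    funext t; exact Finset.sum_congr rfl fun x _ => by rw [hkey t x]
  rw [hfun]
  have hL : HasFDerivAt (fun t => ∑ x, D x * (1 - p t x ^ N))
      (∑ x, D x • (-(((N : ℝ) * p θ x ^ (N - 1)) •
        ∑ y ∈ Finset.univ.filter (fun y => R x y = 0), fderiv ℝ (fun t => π t x y) θ))) θ :=
    HasFDerivAt.fun_sum fun x _ =>
      ((((hasDerivAt_pow N (p θ x)).comp_hasFDerivAt θ (hP x))).const_sub 1).const_mul (D x)
  rw [hL.fderiv]
  apply Finset.sum_congr rfl
  intro x _
  congr 1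
  have hs1 : ∑ y ∈ Finset.univ.filter (fun y => R x y = 1),
      πbon θ x y • fderiv ℝ (fun t => Real.log (π t x y)) θ
      = ((1 - p θ x ^ N) / (1 - p θ x)) •
        (-(∑ y ∈ Finset.univ.filter (fun y => R x y = 0), fderiv ℝ (fun t => π t x y) θ)) := by
    rw [← hDsumS1 x, Finset.smul_sum]
    apply Finset.sum_congr rfl
    intro y hy
    rw [Finset.mem_filter] at hy
    rw [hlog, smul_smul, hbon, if_neg (by rw [hy.2]; norm_num)]
    congr 1
    field_simp
    rw [div_eq_div_iff (mul_ne_zero (ne_of_gt (hpos θ x y)) (h1p θ x)) (h1p θ x)]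
    ring
  have hs0 : ∑ y ∈ Finset.univ.filter (fun y => R x y = 0),
      πbon θ x y • fderiv ℝ (fun t => Real.log (π t x y)) θ
      = (p θ x ^ (N - 1)) •
        (∑ y ∈ Finset.univ.filter (fun y => R x y = 0), fderiv ℝ (fun t => π t x y) θ) := by
    rw [Finset.smul_sum]
    apply Finset.sum_congr rfl
    intro y hy
    rw [Finset.mem_filter] at hy
    rw [hlog, smul_smul, hbon, if_pos hy.2]
    congr 1
    rw [mul_comm (π θ x y), mul_assoc, mul_inv_cancel₀ (ne_of_gt (hpos θ x y)), mul_one]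
  rw [hs1, hs0]
  simp only [smul_smul, smul_neg, ← neg_smul]
  refine (neg_smul _ _).symm.trans ?_
  rw [← add_smul]
  congr 1
  have hpow : p θ x ^ N = p θ x * p θ x ^ (N - 1) := by
    conv_lhs => rw [show N = (N - 1) + 1 by omega]
    rw [pow_succ]; ring
  rw [hgplus, hgminus, hpow]
  have hb : 1 - p θ x ≠ 0 := h1p θ x
  have hbn : 1 - p θ x * p θ x ^ (N - 1) ≠ 0 := by rw [← hpow]; exact h1pN θ x
  field_simp
  rw [div_self (by rw [mul_comm]; exact hbn)]
  ring
end

section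
/- (BoN-RLB(P), Corollary 1) Let X and Y be finite types, D a pmf on X, θ ↦ π_θ(·|x) a differentiable parameterized family of positive pmfs on Y for each x ∈ X, R : X × Y → {0,1} a binary reward, and N ≥ 1 an integer. Set p_θ(x) = ∑_{y : R(x,y)=0} π_θ(y|x) and assume 0 < p_θ(x) < 1 for all θ and x. Define the closed-form BoN policy π_bon,θ(y|x) = π_θ(y|x)·p_θ(x)^{N−1} if R(x,y) = 0 and π_bon,θ(y|x) = π_θ(y|x)·(1 − p_θ(x)^N)/(1 − p_θ(x)) if R(x,y) = 1, and the positive-only weight ḡ⁺_N(p) = N·p^{N−1}·(1 − p)/(1 − p^N). Then ∇_θ [∑_x D(x)·∑_y π_bon,θ(y|x)·R(x,y)] = ∑_x D(x)·ḡ⁺_N(p_θ(x))·∑_{y : R(x,y)=1} π_bon,θ(y|x)·∇_θ log π_θ(y|x). -/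
open scoped Classical

/-- **BoN-RLB(P) positive-only gradient (Corollary 1).**
With `X, Y` finite, `D` a pmf on `X`, a differentiable family of conditional positive pmfs
`π θ x`, a binary reward `R : X × Y → {0,1}`, `N ≥ 1`, failure probability
`p θ x = ∑_{y : R x y = 0} π θ x y ∈ (0,1)`, the closed-form Best-of-N policy
`π_bon θ x y = π θ x y * (p θ x)^(N−1)` if `R x y = 0` and
`π_bon θ x y = π θ x y * (1 − (p θ x)^N)/(1 − p θ x)` if `R x y = 1`, and positive-only weight
`ḡ⁺_N(q) = N * q^(N−1) * (1 − q)/(1 − q^N)`: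
`∇ ∑ x, D x * ∑ y, π_bon θ x y * R x y
  = ∑ x, D x • ḡ⁺_N(p θ x) • ∑_{y : R x y = 1} π_bon θ x y • ∇ log π θ x y`. -/
theorem stmt_9 {X Y : Type*} [Fintype X] [Fintype Y] {d : ℕ}
    (D : X → ℝ) (hDnn : ∀ x, 0 ≤ D x) (hDsum : ∑ x, D x = 1)
    (π : (Fin d → ℝ) → X → Y → ℝ)
    (hpos : ∀ θ x y, 0 < π θ x y) (hsum : ∀ θ x, ∑ y, π θ x y = 1)
    (hdiff : ∀ x y, Differentiable ℝ (fun θ => π θ x y))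
    (R : X → Y → ℝ) (hR : ∀ x y, R x y = 0 ∨ R x y = 1)
    (N : ℕ) (hN : 1 ≤ N)
    (p : (Fin d → ℝ) → X → ℝ)
    (hp : ∀ θ x, p θ x = ∑ y ∈ Finset.univ.filter (fun y => R x y = 0), π θ x y)
    (hp01 : ∀ θ x, 0 < p θ x ∧ p θ x < 1)
    (πbon : (Fin d → ℝ) → X → Y → ℝ)
    (hbon : ∀ θ x y, πbon θ x y =
      if R x y = 0 then π θ x y * (p θ x) ^ (N - 1)
      else π θ x y * (1 - (p θ x) ^ N) / (1 - p θ x))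
    (gbar : ℝ → ℝ)
    (hgbar : ∀ q, gbar q = N * q ^ (N - 1) * (1 - q) / (1 - q ^ N))
    (θ : Fin d → ℝ) :
    fderiv ℝ (fun t => ∑ x, D x * ∑ y, πbon t x y * R x y) θ
      = ∑ x, D x • gbar (p θ x) •
          ∑ y ∈ Finset.univ.filter (fun y => R x y = 1),
            πbon θ x y • fderiv ℝ (fun t => Real.log (π t x y)) θ := by
  classical
  set S1 : X → Finset Y := fun x => Finset.univ.filter (fun y => R x y = 1) with hS1
  set G : X → Y → (Fin d → ℝ) →L[ℝ] ℝ := fun x y => fderiv ℝ (fun t => π t x y) θ with hG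
  set F : X → (Fin d → ℝ) →L[ℝ] ℝ := fun x => fderiv ℝ (fun t => p t x) θ with hF
  have hπd : ∀ x y, HasFDerivAt (fun t => π t x y) (G x y) θ :=
    fun x y => (hdiff x y θ).hasFDerivAt
  have hpdiff : ∀ x, Differentiable ℝ (fun t => p t x) := by
    intro x
    have he : (fun t => p t x)
        = fun t => ∑ y ∈ Finset.univ.filter (fun y => R x y = 0), π t x y := by
      funext t; exact hp t x
    rw [he]
    exact Differentiable.fun_sum fun y _ => hdiff x y
  have hpd : ∀ x, HasFDerivAt (fun t => p t x) (F x) θ := fun x => (hpdiff x θ).hasFDerivAt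
  -- 1 - p ≠ 0 and 1 - p^N ≠ 0 at any t
  have h1p : ∀ t x, (1:ℝ) - p t x ≠ 0 := by
    intro t x; have := (hp01 t x).2; intro h; linarith
  have h1pN : ∀ t x, (1:ℝ) - p t x ^ N ≠ 0 := by
    intro t x
    have h1 := (hp01 t x).1; have h2 := (hp01 t x).2
    have : p t x ^ N < 1 := pow_lt_one₀ h1.le h2 (by omega)
    intro h; linarith
  -- sum over S1 of π equals 1 - p
  have hsum1 : ∀ t x, ∑ y ∈ S1 x, π t x y = 1 - p t x := by
    intro t x
    have h := Finset.sum_filter_add_sum_filter_not Finset.univ (fun y => R x y = 0)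
      (fun y => π t x y)
    have hfe : Finset.univ.filter (fun y => ¬ R x y = 0) = S1 x := by
      apply Finset.filter_congr
      intro y _
      rcases hR x y with h0 | h1
      · simp [h0]
      · simp [h1]
    rw [hfe, hsum t x] at h
    have hpv := hp t x
    linarith
  -- objective equals ∑ x, D x * (1 - p^N)
  have hobj : ∀ t, (∑ x, D x * ∑ y, πbon t x y * R x y)
      = ∑ x, D x * (1 - p t x ^ N) := by
    intro t
    refine Finset.sum_congr rfl fun x _ => ?_
    congr 1
    have hstep : (∑ y, πbon t x y * R x y) = ∑ y ∈ S1 x, πbon t x y * R x y := by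
      refine (Finset.sum_subset (Finset.subset_univ _) ?_).symm
      intro y _ hy
      have : R x y = 0 := by
        rcases hR x y with h0 | h1
        · exact h0
        · exact absurd (Finset.mem_filter.mpr ⟨Finset.mem_univ y, h1⟩) hy
      simp [this]
    rw [hstep]
    have : ∀ y ∈ S1 x, πbon t x y * R x y
        = π t x y * ((1 - p t x ^ N) / (1 - p t x)) := by
      intro y hy
      have h1 : R x y = 1 := (Finset.mem_filter.mp hy).2
      have h0 : ¬ R x y = 0 := by rw [h1]; norm_num
      rw [hbon, if_neg h0, h1, mul_one, mul_div_assoc]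
    rw [Finset.sum_congr rfl this, ← Finset.sum_mul, hsum1 t x,
      ← mul_div_assoc, mul_div_cancel_left₀ _ (h1p t x)]
  -- derivative of ∑ over S1 of π equals -(F x)
  have hGF : ∀ x, (∑ y ∈ S1 x, G x y) = -(F x) := by
    intro x
    have h1 : HasFDerivAt (fun t => ∑ y ∈ S1 x, π t x y) (∑ y ∈ S1 x, G x y) θ :=
      HasFDerivAt.fun_sum fun y _ => hπd x y
    have h2 : HasFDerivAt (fun t => ∑ y ∈ S1 x, π t x y) (-(F x)) θ := by
      have h3 : HasFDerivAt (fun t => (1:ℝ) - p t x) (-(F x)) θ :=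
        (hpd x).const_sub 1
      have he : (fun t => ∑ y ∈ S1 x, π t x y) = fun t => (1:ℝ) - p t x := by
        funext t; exact hsum1 t x
      rw [he]; exact h3
    exact h1.unique h2
  -- LHS computation
  have hL : fderiv ℝ (fun t => ∑ x, D x * ∑ y, πbon t x y * R x y) θ
      = ∑ x, D x • (-((((N:ℝ) * p θ x ^ (N-1))) • F x)) := by
    have he : (fun t => ∑ x, D x * ∑ y, πbon t x y * R x y)
        = fun t => ∑ x, D x * (1 - p t x ^ N) := by
      funext t; exact hobj t
    rw [he]
    have hder : HasFDerivAt (fun t => ∑ x, D x * (1 - p t x ^ N))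
        (∑ x, D x • (-((((N:ℝ) * p θ x ^ (N-1))) • F x))) θ := by
      refine HasFDerivAt.fun_sum fun x _ => ?_
      have hpow : HasFDerivAt (fun t => p t x ^ N) (((N : ℝ) * p θ x ^ (N - 1)) • F x) θ :=
        (hasDerivAt_pow N (p θ x)).comp_hasFDerivAt θ (hpd x)
      exact (hpow.const_sub 1).const_mul (D x)
    exact hder.fderiv
  rw [hL]
  refine Finset.sum_congr rfl fun x _ => ?_
  -- RHS inner sum
  have hlog : ∀ y, fderiv ℝ (fun t => Real.log (π t x y)) θ = (π θ x y)⁻¹ • G x y := by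
    intro y
    exact ((hπd x y).log (ne_of_gt (hpos θ x y))).fderiv
  have hinner : (∑ y ∈ S1 x, πbon θ x y • fderiv ℝ (fun t => Real.log (π t x y)) θ)
      = ((1 - p θ x ^ N) / (1 - p θ x)) • (-(F x)) := by
    rw [← hGF x, Finset.smul_sum]
    refine Finset.sum_congr rfl fun y hy => ?_
    have h1 : R x y = 1 := (Finset.mem_filter.mp hy).2
    have h0 : ¬ R x y = 0 := by rw [h1]; norm_num
    rw [hlog y, hbon, if_neg h0, smul_smul]
    congr 1
    field_simp
    rw [← div_div,
      mul_div_cancel_left₀ _ (ne_of_gt (hpos θ x y))]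
  rw [hinner, hgbar]
  simp only [smul_neg, smul_smul]
  rw [neg_inj]
  congr 1
  have hne1 := h1p θ x
  have hne2 := h1pN θ x
  field_simp
end

section
/- For every integer N ≥ 1, the positive-only weight ḡ⁺_N(p) = N·p^{N−1}·(1 − p)/(1 − p^N), defined for p ∈ (0,1), satisfies 0 < ḡ⁺_N(p) ≤ 1 for all p ∈ (0,1) and is monotonically non-decreasing on (0,1); for N ≥ 2 it is strictly increasing on (0,1) and satisfies ḡ⁺_N(p) < 1, with ḡ⁺_N(p) → 1 as p → 1⁻. (In particular ḡ⁺_N(p) = N / (∑_{j=0}^{N−1} p^{−j}).) -/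
/-- The positive-only BoN-RLB(P) weight `ḡ⁺_N(p) = N·p^(N−1)·(1−p)/(1−p^N)`. -/
noncomputable def gbarPlus (N : ℕ) (p : ℝ) : ℝ :=
  N * p ^ (N - 1) * (1 - p) / (1 - p ^ N)

lemma gbar_eq (N : ℕ) (hN : 1 ≤ N) (p : ℝ) (hp : p ∈ Set.Ioo (0:ℝ) 1) :
    gbarPlus N p = N / ∑ j ∈ Finset.range N, (p⁻¹) ^ j := by
  obtain ⟨hp0, hp1⟩ := hp
  have hpne : p ≠ 0 := ne_of_gt hp0
  have hgeom : (1 : ℝ) - p ^ N = (1 - p) * ∑ i ∈ Finset.range N, p ^ i := by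
    have := geom_sum_mul p N
    linarith [this]
  have hsum : ∑ i ∈ Finset.range N, p ^ i
      = p ^ (N - 1) * ∑ j ∈ Finset.range N, (p⁻¹) ^ j := by
    rw [Finset.mul_sum]
    rw [← Finset.sum_range_reflect (fun i => p ^ i) N]
    apply Finset.sum_congr rfl
    intro j hj
    have hj' : j ≤ N - 1 := Nat.le_sub_one_of_lt (Finset.mem_range.mp hj)
    rw [inv_pow, ← pow_sub₀ p hpne hj']
  have hT : 0 < ∑ j ∈ Finset.range N, (p⁻¹) ^ j := by
    apply Finset.sum_pos
    · intro i _; positivity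
    · exact Finset.nonempty_range_iff.mpr (by omega)
  unfold gbarPlus
  rw [hgeom, hsum]
  have h1p : (1:ℝ) - p ≠ 0 := by linarith
  have hpp : p ^ (N-1) ≠ 0 := pow_ne_zero _ hpne
  have hne : p ^ (N-1) * (1 - p) ≠ 0 := mul_ne_zero hpp h1p
  rw [show (↑N * p^(N-1) * (1-p)) = (p^(N-1)*(1-p)) * ↑N by ring,
      show ((1-p) * (p^(N-1) * (∑ j ∈ Finset.range N, (p⁻¹) ^ j)))
        = (p^(N-1)*(1-p)) * (∑ j ∈ Finset.range N, (p⁻¹) ^ j) by ring,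
      mul_div_mul_left _ _ hne]

lemma Tpos (N : ℕ) (hN : 1 ≤ N) {p : ℝ} (hp0 : 0 < p) :
    0 < ∑ j ∈ Finset.range N, (p⁻¹) ^ j := by
  apply Finset.sum_pos (fun i _ => by positivity)
  exact Finset.nonempty_range_iff.mpr (by omega)

lemma Tge (N : ℕ) {p : ℝ} (hp0 : 0 < p) (hp1 : p ≤ 1) :
    (N : ℝ) ≤ ∑ j ∈ Finset.range N, (p⁻¹) ^ j := by
  have h1 : (1:ℝ) ≤ p⁻¹ := (one_le_inv₀ hp0).mpr hp1
  calc (N : ℝ) = ∑ _j ∈ Finset.range N, (1:ℝ) := by simp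
    _ ≤ _ := Finset.sum_le_sum (fun i _ => one_le_pow₀ h1)

lemma Tgt (N : ℕ) (hN : 2 ≤ N) {p : ℝ} (hp0 : 0 < p) (hp1 : p < 1) :
    (N : ℝ) < ∑ j ∈ Finset.range N, (p⁻¹) ^ j := by
  have h1 : (1:ℝ) < p⁻¹ := (one_lt_inv₀ hp0).mpr hp1
  calc (N : ℝ) = ∑ _j ∈ Finset.range N, (1:ℝ) := by simp
    _ < _ := by
      apply Finset.sum_lt_sum (fun i _ => one_le_pow₀ h1.le)
      exact ⟨1, Finset.mem_range.mpr (by omega), by simpa using h1⟩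

lemma Tanti (N : ℕ) {p q : ℝ} (hp0 : 0 < p) (hpq : p ≤ q) :
    ∑ j ∈ Finset.range N, (q⁻¹) ^ j ≤ ∑ j ∈ Finset.range N, (p⁻¹) ^ j := by
  have hq0 : 0 < q := hp0.trans_le hpq
  have : q⁻¹ ≤ p⁻¹ := inv_anti₀ hp0 hpq
  exact Finset.sum_le_sum fun i _ =>
    pow_le_pow_left₀ (by positivity) this i

lemma Tanti_strict (N : ℕ) (hN : 2 ≤ N) {p q : ℝ} (hp0 : 0 < p) (hpq : p < q) :
    ∑ j ∈ Finset.range N, (q⁻¹) ^ j < ∑ j ∈ Finset.range N, (p⁻¹) ^ j := by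
  have hq0 : 0 < q := hp0.trans hpq
  have h : q⁻¹ < p⁻¹ := inv_strictAnti₀ hp0 hpq
  apply Finset.sum_lt_sum
  · exact fun i _ => pow_le_pow_left₀ (by positivity) h.le i
  · exact ⟨1, Finset.mem_range.mpr (by omega), by simpa using h⟩

/-- **Properties of the positive-only weight `ḡ⁺_N`.**
For every integer `N ≥ 1`: on `(0,1)`, `0 < ḡ⁺_N(p) ≤ 1` and `ḡ⁺_N` is monotonically
non-decreasing; for `N ≥ 2` it is strictly increasing on `(0,1)`, satisfies `ḡ⁺_N(p) < 1`,
and `ḡ⁺_N(p) → 1` as `p → 1⁻`.  In particular `ḡ⁺_N(p) = N / ∑_{j=0}^{N−1} p^{−j}`. -/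
theorem stmt_10 (N : ℕ) (hN : 1 ≤ N) :
    (∀ p ∈ Set.Ioo (0 : ℝ) 1, 0 < gbarPlus N p ∧ gbarPlus N p ≤ 1) ∧
    (∀ p ∈ Set.Ioo (0 : ℝ) 1, ∀ q ∈ Set.Ioo (0 : ℝ) 1, p ≤ q →
      gbarPlus N p ≤ gbarPlus N q) ∧
    (2 ≤ N →
      StrictMonoOn (gbarPlus N) (Set.Ioo (0 : ℝ) 1) ∧
      (∀ p ∈ Set.Ioo (0 : ℝ) 1, gbarPlus N p < 1) ∧
      Filter.Tendsto (gbarPlus N) (nhdsWithin 1 (Set.Iio 1)) (nhds 1)) ∧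
    (∀ p ∈ Set.Ioo (0 : ℝ) 1,
      gbarPlus N p = N / ∑ j ∈ Finset.range N, p ^ (-(j : ℤ))) := by
  have hN0 : (0:ℝ) < N := by exact_mod_cast hN
  refine ⟨?_, ?_, ?_, ?_⟩
  · intro p hp
    rw [gbar_eq N hN p hp]
    have hT := Tpos N hN hp.1
    constructor
    · positivity
    · rw [div_le_one hT]
      exact Tge N hp.1 hp.2.le
  · intro p hp q hq hpq
    rw [gbar_eq N hN p hp, gbar_eq N hN q hq]
    have hTq := Tpos N hN hq.1
    exact div_le_div_of_nonneg_left hN0.le hTq (Tanti N hp.1 hpq)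
  · intro hN2
    refine ⟨?_, ?_, ?_⟩
    · intro p hp q hq hpq
      rw [gbar_eq N hN p hp, gbar_eq N hN q hq]
      exact div_lt_div_of_pos_left hN0 (Tpos N hN hq.1) (Tanti_strict N hN2 hp.1 hpq)
    · intro p hp
      rw [gbar_eq N hN p hp, div_lt_one (Tpos N hN hp.1)]
      exact Tgt N hN2 hp.1 hp.2
    · set f : ℝ → ℝ := fun p => (N : ℝ) / ∑ j ∈ Finset.range N, (p⁻¹) ^ j with hf
      have houter : Continuous (fun x : ℝ => ∑ j ∈ Finset.range N, x ^ j) :=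
        continuous_finset_sum _ fun j _ => continuous_pow j
      have hden : ContinuousAt (fun p : ℝ => ∑ j ∈ Finset.range N, (p⁻¹) ^ j) 1 :=
        houter.continuousAt.comp (continuousAt_inv₀ one_ne_zero)
      have hval : (∑ j ∈ Finset.range N, ((1:ℝ)⁻¹) ^ j) = (N : ℝ) := by simp
      have hcont : ContinuousAt f 1 := by
        apply continuousAt_const.div hden
        rw [hval]; exact ne_of_gt hN0
      have htend : Filter.Tendsto f (nhdsWithin 1 (Set.Iio 1)) (nhds (f 1)) :=
        hcont.continuousWithinAt.tendsto
      have hf1 : f 1 = 1 := by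
        rw [hf]; simp only [hval]; exact div_self (ne_of_gt hN0)
      rw [hf1] at htend
      refine Filter.Tendsto.congr' ?_ htend
      filter_upwards [Ioo_mem_nhdsLT_of_mem (⟨zero_lt_one, le_refl (1:ℝ)⟩ : (1:ℝ) ∈ Set.Ioc 0 1)] with p hp
      exact (gbar_eq N hN p hp).symm
  · intro p hp
    rw [gbar_eq N hN p hp]
    congr 1
    exact Finset.sum_congr rfl fun j _ => by
      rw [zpow_neg, zpow_natCast, inv_pow]
end

section
/- For every real N ≥ 1 there exists a unique λ_N > 0 satisfying (λ_N − 1)·exp(λ_N + 1)/exp(λ_N − 1) − log((exp(λ_N) − 1)/λ_N) = log N − (N − 1)/N, and the map N ↦ λ_N is strictly increasing on [1, ∞). -/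
/-- The left-hand side of the defining equation of the Best-of-N variational
coefficient `λ_N`: `h(λ) = (λ − 1)·exp(λ + 1)/exp(λ − 1) − log((exp λ − 1)/λ)`. -/
noncomputable def bonH (l : ℝ) : ℝ :=
  (l - 1) * Real.exp (l + 1) / Real.exp (l - 1) - Real.log ((Real.exp l - 1) / l)

private noncomputable def bonG (l : ℝ) : ℝ :=
  (l - 1) * Real.exp 2 - Real.log (Real.exp l - 1) + Real.log l

private lemma exp_sub_one_pos {l : ℝ} (hl : 0 < l) : 0 < Real.exp l - 1 := by
  have := Real.add_one_lt_exp (x := l) hl.ne'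
  linarith

private lemma bonH_eq {l : ℝ} (hl : 0 < l) : bonH l = bonG l := by
  have h1 := exp_sub_one_pos hl
  unfold bonH bonG
  rw [Real.log_div h1.ne' hl.ne']
  have h2 : Real.exp (l + 1) = Real.exp (l - 1) * Real.exp 2 := by
    rw [← Real.exp_add]; ring_nf
  rw [h2]
  have h3 : Real.exp (l - 1) ≠ 0 := Real.exp_ne_zero _
  field_simp
  ring

private lemma bonG_hasDeriv {x : ℝ} (hx : 0 < x) :
    HasDerivAt bonG (1 * Real.exp 2 - Real.exp x / (Real.exp x - 1) + x⁻¹) x := by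
  have h1 := exp_sub_one_pos hx
  have hd1 : HasDerivAt (fun l : ℝ => (l - 1) * Real.exp 2) (1 * Real.exp 2) x :=
    ((hasDerivAt_id x).sub_const 1).mul_const _
  have hd2 : HasDerivAt (fun l : ℝ => Real.log (Real.exp l - 1))
      (Real.exp x / (Real.exp x - 1)) x :=
    ((Real.hasDerivAt_exp x).sub_const 1).log h1.ne'
  exact (hd1.sub hd2).add (Real.hasDerivAt_log hx.ne')

private lemma bonG_mono : StrictMonoOn bonG (Set.Ioi 0) := by
  apply strictMonoOn_of_deriv_pos (convex_Ioi 0)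
  · intro x hx
    exact (bonG_hasDeriv hx).continuousAt.continuousWithinAt
  · intro x hx
    rw [interior_Ioi] at hx
    rw [(bonG_hasDeriv hx).deriv]
    have h1 := exp_sub_one_pos hx
    have hlt : x < Real.exp x - 1 := by
      have := Real.add_one_lt_exp (x := x) hx.ne'; linarith
    have hfrac : Real.exp x / (Real.exp x - 1) = 1 + 1 / (Real.exp x - 1) := by
      field_simp
      ring
    have h2 : 1 / (Real.exp x - 1) < 1 / x := one_div_lt_one_div_of_lt hx hlt
    have h3 : (3:ℝ) ≤ Real.exp 2 := by have := Real.add_one_le_exp 2; linarith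
    have hxi : x⁻¹ = 1 / x := (one_div x).symm
    rw [hfrac, hxi]
    linarith

private lemma bonH_mono : StrictMonoOn bonH (Set.Ioi 0) := by
  intro a ha b hb hab
  rw [bonH_eq ha, bonH_eq hb]
  exact bonG_mono ha hb hab

private noncomputable def bonR (N : ℝ) : ℝ := Real.log N - (N - 1) / N

private lemma bonR_hasDeriv {N : ℝ} (hN : 0 < N) :
    HasDerivAt bonR (N⁻¹ - (1 * N - (N - 1) * 1) / N ^ 2) N :=
  (Real.hasDerivAt_log hN.ne').sub
    (((hasDerivAt_id N).sub_const 1).div (hasDerivAt_id N) hN.ne')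

private lemma bonR_mono : StrictMonoOn bonR (Set.Ici 1) := by
  apply strictMonoOn_of_deriv_pos (convex_Ici 1)
  · intro x hx
    have hx0 : (0:ℝ) < x := lt_of_lt_of_le one_pos hx
    exact (bonR_hasDeriv hx0).continuousAt.continuousWithinAt
  · intro x hx
    rw [interior_Ici] at hx
    have hx0 : (0:ℝ) < x := lt_trans one_pos hx
    rw [(bonR_hasDeriv hx0).deriv]
    have : x⁻¹ - (1 * x - (x - 1) * 1) / x ^ 2 = (x - 1) / x ^ 2 := by
      field_simp; ring
    rw [this]
    have hx' : 1 < x := hx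
    have hx1 : 0 < x - 1 := by linarith
    positivity

private lemma bonR_nonneg {N : ℝ} (hN : 1 ≤ N) : 0 ≤ bonR N := by
  have h1 : bonR 1 = 0 := by simp [bonR]
  have := bonR_mono.monotoneOn Set.self_mem_Ici hN hN
  linarith

private lemma bonH_tendsto :
    Filter.Tendsto bonH (nhdsWithin 0 (Set.Ioi 0)) (nhds (-Real.exp 2)) := by
  have hfirst : Filter.Tendsto (fun l : ℝ => (l - 1) * Real.exp (l + 1) / Real.exp (l - 1))
      (nhdsWithin 0 (Set.Ioi 0)) (nhds (-Real.exp 2)) := by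
    have hc : ContinuousAt (fun l : ℝ => (l - 1) * Real.exp (l + 1) / Real.exp (l - 1)) 0 := by
      apply ContinuousAt.div
      · exact (continuousAt_id.sub continuousAt_const).mul
          (Real.continuous_exp.continuousAt.comp (continuousAt_id.add continuousAt_const))
      · exact Real.continuous_exp.continuousAt.comp (continuousAt_id.sub continuousAt_const)
      · exact Real.exp_ne_zero _
    have hval : ((0:ℝ) - 1) * Real.exp (0 + 1) / Real.exp (0 - 1) = -Real.exp 2 := by
      rw [show (0:ℝ) - 1 = -1 by ring, show (0:ℝ) + 1 = 1 by ring]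
      rw [Real.exp_neg]
      rw [show (2:ℝ) = 1 + 1 by ring, Real.exp_add]
      field_simp
    have h := hc.tendsto
    rw [hval] at h
    exact h.mono_left nhdsWithin_le_nhds
  have hslope : Filter.Tendsto (fun l : ℝ => (Real.exp l - 1) / l)
      (nhdsWithin 0 (Set.Ioi 0)) (nhds 1) := by
    have h := (hasDerivAt_iff_tendsto_slope.mp (Real.hasDerivAt_exp 0))
    rw [Real.exp_zero] at h
    have hmono : nhdsWithin (0:ℝ) (Set.Ioi 0) ≤ nhdsWithin 0 {(0:ℝ)}ᶜ := by
      apply nhdsWithin_mono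
      intro x hx
      exact ne_of_gt hx
    have h2 := h.mono_left hmono
    apply h2.congr
    intro x
    simp [slope_def_field, Real.exp_zero]
  have hsecond : Filter.Tendsto (fun l : ℝ => Real.log ((Real.exp l - 1) / l))
      (nhdsWithin 0 (Set.Ioi 0)) (nhds 0) := by
    have := (Real.continuousAt_log one_ne_zero).tendsto.comp hslope
    simpa [Function.comp_def] using this
  have := hfirst.sub hsecond
  rw [sub_zero] at this; exact this

private lemma bonH_continuousAt {x : ℝ} (hx : 0 < x) : ContinuousAt bonH x := by
  have h1 := exp_sub_one_pos hx
  have harg : (Real.exp x - 1) / x ≠ 0 := by positivity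
  apply ContinuousAt.sub
  · apply ContinuousAt.div
    · exact (continuousAt_id.sub continuousAt_const).mul
        (Real.continuous_exp.continuousAt.comp (continuousAt_id.add continuousAt_const))
    · exact Real.continuous_exp.continuousAt.comp (continuousAt_id.sub continuousAt_const)
    · exact Real.exp_ne_zero _
  · exact ContinuousAt.log
      (((Real.continuous_exp.continuousAt.sub continuousAt_const)).div
        continuousAt_id hx.ne') harg

/-- **Existence, uniqueness and monotonicity of the BoN variational coefficient `λ_N`.**
For every real `N ≥ 1` there is a unique `λ_N > 0` with
`h(λ_N) = log N − (N − 1)/N`, and the map `N ↦ λ_N` is strictly increasing on `[1, ∞)`: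
whenever `1 ≤ N < M` and `λ_N, λ_M > 0` are the corresponding solutions, `λ_N < λ_M`. -/
theorem stmt_13 :
    (∀ N : ℝ, 1 ≤ N →
      ∃! l : ℝ, 0 < l ∧ bonH l = Real.log N - (N - 1) / N) ∧
    (∀ N M lN lM : ℝ, 1 ≤ N → N < M → 0 < lN → 0 < lM →
      bonH lN = Real.log N - (N - 1) / N →
      bonH lM = Real.log M - (M - 1) / M →
      lN < lM) := by
  constructor
  · intro N hN
    set r := Real.log N - (N - 1) / N with hr_def
    have hr0 : 0 ≤ r := bonR_nonneg hN
    have hneg : -Real.exp 2 < r := by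
      have := Real.exp_pos 2; linarith
    have hev : ∀ᶠ l in nhdsWithin (0:ℝ) (Set.Ioi 0), bonH l < r :=
      bonH_tendsto.eventually_lt_const hneg
    obtain ⟨a, ha_lt, ha_pos⟩ := (hev.and self_mem_nhdsWithin).exists
    have ha_pos' : (0:ℝ) < a := ha_pos
    set b := max (a + 1) (r + 2) with hb_def
    have hb1 : a + 1 ≤ b := le_max_left _ _
    have hb2 : r + 2 ≤ b := le_max_right _ _
    have hab : a ≤ b := by linarith
    have hb_pos : (0:ℝ) < b := by linarith
    have hb_ge1 : (1:ℝ) ≤ b := by linarith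
    have hgb : r < bonH b := by
      rw [bonH_eq hb_pos]
      unfold bonG
      have h1 := exp_sub_one_pos hb_pos
      have hlog1 : Real.log (Real.exp b - 1) ≤ b := by
        have := Real.log_le_log h1 (by linarith : Real.exp b - 1 ≤ Real.exp b)
        rwa [Real.log_exp] at this
      have hlog2 : 0 ≤ Real.log b := Real.log_nonneg hb_ge1
      have h3 : (3:ℝ) ≤ Real.exp 2 := by have := Real.add_one_le_exp 2; linarith
      nlinarith
    have hcont : ContinuousOn bonH (Set.Icc a b) := by
      intro x hx
      exact (bonH_continuousAt (lt_of_lt_of_le ha_pos' hx.1)).continuousWithinAt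
    have hmem : r ∈ Set.Icc (bonH a) (bonH b) := ⟨ha_lt.le, hgb.le⟩
    obtain ⟨l, hl_mem, hl_eq⟩ := intermediate_value_Icc hab hcont hmem
    have hl_pos : 0 < l := lt_of_lt_of_le ha_pos' hl_mem.1
    refine ⟨l, ⟨hl_pos, hl_eq⟩, ?_⟩
    rintro l' ⟨hl'_pos, hl'_eq⟩
    exact bonH_mono.injOn hl'_pos hl_pos (by rw [hl'_eq, hl_eq])
  · intro N M lN lM hN hNM hlN hlM heqN heqM
    have hM : (1:ℝ) ≤ M := le_of_lt (lt_of_le_of_lt hN hNM)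
    have hrlt : bonR N < bonR M := bonR_mono hN hM hNM
    have hlt : bonH lN < bonH lM := by
      rw [heqN, heqM]; exact hrlt
    by_contra hcon
    push_neg at hcon
    have := bonH_mono.monotoneOn hlM hlN hcon
    linarith
end

section
/- Let λ_N > 0 be the unique solution of (λ_N − 1)·exp(λ_N + 1)/exp(λ_N − 1) − log((exp(λ_N) − 1)/λ_N) = log N − (N − 1)/N for real N ≥ 1. Then λ_N scales sub-linearly with N: λ_N ≤ (log N − 1 + 1/N + e²)/(e² − 1) for all N ≥ 1, and in particular λ_N / N → 0 as N → ∞. -/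
lemma bonH_lower (l : ℝ) (hl : 0 < l) : (l - 1) * Real.exp 2 - l ≤ bonH l := by
  have h1 : (l - 1) * Real.exp (l + 1) / Real.exp (l - 1) = (l - 1) * Real.exp 2 := by
    rw [show (l + 1 : ℝ) = (l - 1) + 2 by ring, Real.exp_add]
    field_simp [Real.exp_ne_zero]
  have hexp1 : 1 < Real.exp l := by
    rw [show (1 : ℝ) = Real.exp 0 by simp]
    exact Real.exp_lt_exp.mpr hl
  have hpos : 0 < (Real.exp l - 1) / l := div_pos (by linarith) hl
  have hlog : Real.log ((Real.exp l - 1) / l) ≤ l := by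
    rw [Real.log_le_iff_le_exp hpos, div_le_iff₀ hl]
    have h5 : (-l + 1) * Real.exp l ≤ 1 := by
      have := mul_le_mul_of_nonneg_right (Real.add_one_le_exp (-l)) (Real.exp_pos l).le
      rwa [← Real.exp_add, neg_add_cancel, Real.exp_zero] at this
    nlinarith [h5]
  unfold bonH
  rw [h1]
  linarith

/-- **Sub-linear scaling of the BoN variational coefficient `λ_N`.**
If for real `N ≥ 1`, `λ_N > 0` solves `h(λ_N) = log N − (N − 1)/N`, then
`λ_N ≤ (log N − 1 + 1/N + e²)/(e² − 1)`, and for any assignment `N ↦ λ_N` of positive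
solutions we have `λ_N / N → 0` as `N → ∞`. -/
theorem stmt_14 :
    (∀ N l : ℝ, 1 ≤ N → 0 < l →
      bonH l = Real.log N - (N - 1) / N →
      l ≤ (Real.log N - 1 + 1 / N + Real.exp 2) / (Real.exp 2 - 1)) ∧
    (∀ lam : ℝ → ℝ,
      (∀ N : ℝ, 1 ≤ N →
        0 < lam N ∧ bonH (lam N) = Real.log N - (N - 1) / N) →
      Filter.Tendsto (fun N => lam N / N) Filter.atTop (nhds 0)) := by
  have he2 : 1 < Real.exp 2 := by
    rw [show (1 : ℝ) = Real.exp 0 by simp]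
    exact Real.exp_lt_exp.mpr (by norm_num)
  have key : ∀ N l : ℝ, 1 ≤ N → 0 < l →
      bonH l = Real.log N - (N - 1) / N →
      l ≤ (Real.log N - 1 + 1 / N + Real.exp 2) / (Real.exp 2 - 1) := by
    intro N l hN hl heq
    have hlow := bonH_lower l hl
    have hN0 : (0 : ℝ) < N := lt_of_lt_of_le one_pos hN
    have hdiv : (N - 1) / N = 1 - 1 / N := by field_simp
    rw [le_div_iff₀ (by linarith : (0:ℝ) < Real.exp 2 - 1)]
    have : (l - 1) * Real.exp 2 - l ≤ Real.log N - (N - 1) / N := by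
      rw [← heq]; exact hlow
    rw [hdiv] at this
    nlinarith
  refine ⟨key, fun lam hlam => ?_⟩
  have hub : Filter.Tendsto
      (fun N : ℝ => (Real.log N - 1 + 1 / N + Real.exp 2) / (Real.exp 2 - 1) / N)
      Filter.atTop (nhds 0) := by
    have h1 : Filter.Tendsto (fun N : ℝ => Real.log N / N) Filter.atTop (nhds 0) :=
      Real.isLittleO_log_id_atTop.tendsto_div_nhds_zero
    have h2 : Filter.Tendsto (fun N : ℝ => (1:ℝ) / N) Filter.atTop (nhds 0) :=
      tendsto_inv_atTop_zero.congr (fun x => (one_div x).symm)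
    have h3 : Filter.Tendsto (fun N : ℝ => (Real.exp 2 - 1) / N) Filter.atTop (nhds 0) := by
      simpa only [mul_one_div, mul_zero] using h2.const_mul (Real.exp 2 - 1)
    have h4 : Filter.Tendsto (fun N : ℝ => (1:ℝ) / N * (1 / N)) Filter.atTop (nhds 0) := by
      simpa using h2.mul h2
    have hsum : Filter.Tendsto
        (fun N : ℝ => Real.log N / N + (Real.exp 2 - 1) / N + 1 / N * (1 / N))
        Filter.atTop (nhds 0) := by
      simpa using (h1.add h3).add h4
    have := hsum.const_mul (1 / (Real.exp 2 - 1))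
    rw [mul_zero] at this
    apply this.congr'
    filter_upwards [Filter.eventually_gt_atTop (0:ℝ)] with N hN
    have hN' : N ≠ 0 := ne_of_gt hN
    have he2' : Real.exp 2 - 1 ≠ 0 := by linarith
    field_simp
    ring
  apply squeeze_zero' (t₀ := Filter.atTop)
  · filter_upwards [Filter.eventually_ge_atTop (1:ℝ)] with N hN
    exact div_nonneg ((hlam N hN).1.le) (by linarith)
  · filter_upwards [Filter.eventually_ge_atTop (1:ℝ)] with N hN
    have hb := key N (lam N) hN (hlam N hN).1 (hlam N hN).2
    exact div_le_div_of_nonneg_right hb (by linarith) |>.trans_eq rfl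
  · exact hub
end

section
/- (STaR decomposition of the BoN-RL policy gradient) With Y a finite type, a differentiable parameterized family θ ↦ π_θ of positive pmfs on Y, a kernel w : Y × Y → ℝ, λ > 0, and a reward R : Y → ℝ, define Q_θ(y) = ∑_{y'} π_θ(y')·w(y,y'), Z_θ = ∑_y π_θ(y)·exp(λ·Q_θ(y)), and π_bon,θ(y) = π_θ(y)·exp(λ·Q_θ(y))/Z_θ. Then the policy gradient decomposes as ∇_θ [∑_y π_bon,θ(y)·R(y)] = ∑_y π_bon,θ(y)·∇_θ log π_θ(y)·R(y) + ∑_y π_bon,θ(y)·(λ·∇_θ Q_θ(y) − ∇_θ log Z_θ)·R(y), where the first term is the reward-weighted (STaR-style) gradient over BoN samples and the second accounts for the gradient of the importance weight exp(λ·Q_θ)/Z_θ between π_θ and π_bon,θ. -/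
/-- **STaR decomposition of the BoN-RL policy gradient.**
With a differentiable parameterized family `θ ↦ π θ` of positive pmfs on a finite type `Y`,
kernel `w`, `λ > 0`, reward `R`, `Q θ y = ∑ y', π θ y' * w y y'`,
`Z θ = ∑ y, π θ y * exp (λ * Q θ y)`, and `π_bon θ y = π θ y * exp (λ * Q θ y) / Z θ`,
the policy gradient decomposes as
`∇ ∑ y, π_bon θ y * R y
  = ∑ y, (π_bon θ y * R y) • ∇ log π θ y
    + ∑ y, (π_bon θ y * R y) • (λ • ∇ Q θ y − ∇ log Z θ)`,
where the first term is the reward-weighted (STaR-style) gradient over BoN samples and the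
second accounts for the gradient of the importance weight `exp(λ·Q θ)/Z θ`. -/
theorem stmt_15 {Y : Type*} [Fintype Y] {d : ℕ}
    (π : (Fin d → ℝ) → Y → ℝ)
    (hpos : ∀ θ y, 0 < π θ y) (hsum : ∀ θ, ∑ y, π θ y = 1)
    (hdiff : ∀ y, Differentiable ℝ (fun θ => π θ y))
    (w : Y → Y → ℝ) (lam : ℝ) (hlam : 0 < lam)
    (R : Y → ℝ)
    (Q : (Fin d → ℝ) → Y → ℝ)
    (hQ : ∀ θ y, Q θ y = ∑ y', π θ y' * w y y')
    (Z : (Fin d → ℝ) → ℝ)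
    (hZ : ∀ θ, Z θ = ∑ y, π θ y * Real.exp (lam * Q θ y))
    (πbon : (Fin d → ℝ) → Y → ℝ)
    (hbon : ∀ θ y, πbon θ y = π θ y * Real.exp (lam * Q θ y) / Z θ)
    (θ : Fin d → ℝ) :
    fderiv ℝ (fun t => ∑ y, πbon t y * R y) θ
      = ∑ y, (πbon θ y * R y) • fderiv ℝ (fun t => Real.log (π t y)) θ
        + ∑ y, (πbon θ y * R y) •
            (lam • fderiv ℝ (fun t => Q t y) θ
              - fderiv ℝ (fun t => Real.log (Z t)) θ) := by
  -- Y is nonempty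
  have hne : Nonempty Y := by
    by_contra h
    have := hsum θ
    rw [Finset.sum_eq_zero (fun y _ => absurd ⟨y⟩ h)] at this
    norm_num at this
  -- differentiability of Q
  have hQd : ∀ y, Differentiable ℝ (fun t => Q t y) := by
    intro y
    have : (fun t => Q t y) = fun t => ∑ y', π t y' * w y y' := by
      funext t; exact hQ t y
    rw [this]
    exact Differentiable.fun_sum fun y' _ => (hdiff y').mul_const _
  -- differentiability of Z
  have hZd : Differentiable ℝ Z := by
    have : Z = fun t => ∑ y, π t y * Real.exp (lam * Q t y) := funext hZ
    rw [this]
    exact Differentiable.fun_sum fun y _ =>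
      (hdiff y).mul (((hQd y).const_mul lam).exp)
  -- positivity of Z
  have hZpos : ∀ t, 0 < Z t := by
    intro t
    rw [hZ t]
    exact Finset.sum_pos (fun y _ => mul_pos (hpos t y) (Real.exp_pos _))
      Finset.univ_nonempty
  -- positivity of πbon
  have hbpos : ∀ t y, 0 < πbon t y := by
    intro t y
    rw [hbon t y]
    exact div_pos (mul_pos (hpos t y) (Real.exp_pos _)) (hZpos t)
  -- representation of πbon as exp of a difference of logs
  have hrepr : ∀ y, (fun t => πbon t y)
      = fun t => Real.exp (Real.log (π t y) + (lam * Q t y - Real.log (Z t))) := by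
    intro y; funext t
    rw [hbon t y, Real.exp_add, Real.exp_sub, Real.exp_log (hpos t y),
      Real.exp_log (hZpos t)]
    ring
  -- key derivative of each πbon
  have hlogπ : ∀ y, HasFDerivAt (fun t => Real.log (π t y))
      (fderiv ℝ (fun t => Real.log (π t y)) θ) θ := by
    intro y
    exact (((hdiff y).differentiableAt).log (ne_of_gt (hpos θ y))).hasFDerivAt
  have hlogZ : HasFDerivAt (fun t => Real.log (Z t))
      (fderiv ℝ (fun t => Real.log (Z t)) θ) θ :=
    ((hZd.differentiableAt).log (ne_of_gt (hZpos θ))).hasFDerivAt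
  have hQf : ∀ y, HasFDerivAt (fun t => Q t y) (fderiv ℝ (fun t => Q t y) θ) θ :=
    fun y => ((hQd y).differentiableAt).hasFDerivAt
  have key : ∀ y, HasFDerivAt (fun t => πbon t y)
      (πbon θ y • (fderiv ℝ (fun t => Real.log (π t y)) θ
        + (lam • fderiv ℝ (fun t => Q t y) θ
          - fderiv ℝ (fun t => Real.log (Z t)) θ))) θ := by
    intro y
    have hg : HasFDerivAt
        (fun t => Real.log (π t y) + (lam * Q t y - Real.log (Z t)))
        (fderiv ℝ (fun t => Real.log (π t y)) θ
          + (lam • fderiv ℝ (fun t => Q t y) θ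
            - fderiv ℝ (fun t => Real.log (Z t)) θ)) θ :=
      (hlogπ y).add (((hQf y).const_mul lam).sub hlogZ)
    have := hg.exp
    rw [← hrepr y] at this
    have hval : Real.exp (Real.log (π θ y) + (lam * Q θ y - Real.log (Z θ)))
        = πbon θ y := by
      have := congrFun (hrepr y) θ; rw [this]
    rwa [hval] at this
  -- assemble
  have hterm : ∀ y, HasFDerivAt (fun t => πbon t y * R y)
      (R y • (πbon θ y • (fderiv ℝ (fun t => Real.log (π t y)) θ
        + (lam • fderiv ℝ (fun t => Q t y) θ
          - fderiv ℝ (fun t => Real.log (Z t)) θ)))) θ := by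
    intro y
    exact (key y).mul_const (R y)
  have hsumf : HasFDerivAt (fun t => ∑ y, πbon t y * R y)
      (∑ y, R y • (πbon θ y • (fderiv ℝ (fun t => Real.log (π t y)) θ
        + (lam • fderiv ℝ (fun t => Q t y) θ
          - fderiv ℝ (fun t => Real.log (Z t)) θ)))) θ :=
    HasFDerivAt.fun_sum (fun y _ => hterm y)
  rw [hsumf.fderiv]
  rw [← Finset.sum_add_distrib]
  apply Finset.sum_congr rfl
  intro y _
  rw [smul_smul, smul_add]
  ring_nf
end

section
/- (Sufficiency of the KL-regularized consistency condition) Let Y be a finite type, π_β a positive pmf on Y, β > 0, and R : Y → ℝ. Suppose there exist a real number V and a positive pmf π on Y such that V = R(y) + β·log π_β(y) − β·log π(y) for every y ∈ Y. Then π(y) = π_β(y)·exp(R(y)/β) / (∑_{y'} π_β(y')·exp(R(y')/β)) for all y, V = β·log ∑_{y'} π_β(y')·exp(R(y')/β), and π is the unique maximizer over pmfs μ on Y of the KL-regularized objective ∑_y μ(y)·R(y) − β·KL(μ‖π_β). -/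
open Finset

private lemma kl_term_le' {x p : ℝ} (hx : 0 ≤ x) (hp : 0 < p) :
    x - p ≤ x * Real.log (x / p) := by
  rcases eq_or_lt_of_le hx with h | h
  · simp [← h]; linarith
  · have h1 : Real.log (p / x) ≤ p / x - 1 := Real.log_le_sub_one_of_pos (by positivity)
    have h2 : Real.log (p / x) = - Real.log (x / p) := by
      rw [← Real.log_inv]; congr 1; field_simp
    have h3 := mul_le_mul_of_nonneg_left h1 h.le
    rw [h2] at h3
    have h4 : x * (p / x - 1) = p - x := by field_simp
    nlinarith

private lemma kl_term_lt' {x p : ℝ} (hx : 0 ≤ x) (hp : 0 < p) (hne : x ≠ p) :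
    x - p < x * Real.log (x / p) := by
  rcases eq_or_lt_of_le hx with h | h
  · simp [← h]; linarith
  · have h1 : Real.log (p / x) < p / x - 1 :=
      Real.log_lt_sub_one_of_pos (by positivity) (by
        intro hc; apply hne; field_simp at hc; linarith)
    have h2 : Real.log (p / x) = - Real.log (x / p) := by
      rw [← Real.log_inv]; congr 1; field_simp
    have h3 := mul_lt_mul_of_pos_left h1 h
    rw [h2] at h3
    have h4 : x * (p / x - 1) = p - x := by field_simp
    nlinarith

/-- **Sufficiency of the KL-regularized consistency condition.**
Let `Y` be finite, `π_β` a positive pmf, `β > 0`, `R : Y → ℝ`.  If there exist `V : ℝ` and a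
positive pmf `π` with `V = R y + β·log π_β y − β·log π y` for every `y`, then
`π y = π_β y · exp(R y / β) / ∑ y', π_β y' · exp(R y' / β)`,
`V = β · log ∑ y', π_β y' · exp(R y' / β)`, and `π` is the unique maximizer over pmfs `μ` of
`∑ y, μ y · R y − β · KL(μ‖π_β)`. -/
theorem stmt_16 {Y : Type*} [Fintype Y]
    (πβ : Y → ℝ) (hβpos : ∀ y, 0 < πβ y) (hβsum : ∑ y, πβ y = 1)
    (β : ℝ) (hβ : 0 < β) (R : Y → ℝ)
    (V : ℝ) (π : Y → ℝ) (hπpos : ∀ y, 0 < π y) (hπsum : ∑ y, π y = 1)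
    (hconsistency : ∀ y, V = R y + β * Real.log (πβ y) - β * Real.log (π y)) :
    (∀ y, π y = πβ y * Real.exp (R y / β) / ∑ y', πβ y' * Real.exp (R y' / β)) ∧
    (V = β * Real.log (∑ y', πβ y' * Real.exp (R y' / β))) ∧
    (∀ μ : Y → ℝ, (∀ y, 0 ≤ μ y) → (∑ y, μ y = 1) →
      ((∑ y, μ y * R y) - β * (∑ y, μ y * Real.log (μ y / πβ y))
          ≤ (∑ y, π y * R y) - β * (∑ y, π y * Real.log (π y / πβ y))) ∧
      (((∑ y, μ y * R y) - β * (∑ y, μ y * Real.log (μ y / πβ y))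
          = (∑ y, π y * R y) - β * (∑ y, π y * Real.log (π y / πβ y))) → μ = π)) := by
  set Z : ℝ := ∑ y', πβ y' * Real.exp (R y' / β) with hZ
  -- π y = πβ y * exp(R y / β) * exp(-V/β)
  have hform : ∀ y, π y = πβ y * Real.exp (R y / β) * Real.exp (-V / β) := by
    intro y
    have h1 : Real.log (π y) = R y / β + Real.log (πβ y) - V / β := by
      have := hconsistency y; field_simp; linarith
    have := Real.exp_log (hπpos y)
    rw [← this, h1]
    rw [show R y / β + Real.log (πβ y) - V / β
        = Real.log (πβ y) + R y / β + (-V / β) by ring]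
    rw [Real.exp_add, Real.exp_add, Real.exp_log (hβpos y)]
  have hZsum : Z * Real.exp (-V / β) = 1 := by
    rw [hZ, Finset.sum_mul, ← hπsum]
    exact Finset.sum_congr rfl fun y _ => (hform y).symm
  have hZpos : 0 < Z := by
    have : 0 < Real.exp (-V / β) := Real.exp_pos _
    nlinarith
  have hZexp : Z = Real.exp (V / β) := by
    have h := hZsum
    have : Real.exp (-V / β) = (Real.exp (V / β))⁻¹ := by
      rw [← Real.exp_neg]; ring_nf
    rw [this] at h
    field_simp at h
    linarith
  have hV : V = β * Real.log Z := by
    rw [hZexp, Real.log_exp]; field_simp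
  have hπeq : ∀ y, π y = πβ y * Real.exp (R y / β) / Z := by
    intro y
    rw [hform y, hZexp, show (-V/β) = -(V/β) by ring, Real.exp_neg, div_eq_mul_inv]
    ring
  refine ⟨hπeq, hV, ?_⟩
  -- objective rewrite
  have hobj : ∀ μ : Y → ℝ, (∀ y, 0 ≤ μ y) → (∑ y, μ y = 1) →
      (∑ y, μ y * R y) - β * (∑ y, μ y * Real.log (μ y / πβ y))
        = V - β * (∑ y, μ y * Real.log (μ y / π y)) := by
    intro μ hμpos hμsum
    have hR : ∀ y, R y = V + β * Real.log (π y) - β * Real.log (πβ y) := by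
      intro y; have := hconsistency y; linarith
    have key : ∀ y, μ y * R y - β * (μ y * Real.log (μ y / πβ y))
        = μ y * V - β * (μ y * Real.log (μ y / π y)) := by
      intro y
      rcases eq_or_lt_of_le (hμpos y) with h0 | h0
      · simp [← h0]
      · rw [hR y, Real.log_div (ne_of_gt h0) (ne_of_gt (hβpos y)),
          Real.log_div (ne_of_gt h0) (ne_of_gt (hπpos y))]
        ring
    calc (∑ y, μ y * R y) - β * (∑ y, μ y * Real.log (μ y / πβ y))
        = ∑ y, (μ y * R y - β * (μ y * Real.log (μ y / πβ y))) := by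
          rw [Finset.sum_sub_distrib, ← Finset.mul_sum]
      _ = ∑ y, (μ y * V - β * (μ y * Real.log (μ y / π y))) :=
          Finset.sum_congr rfl fun y _ => key y
      _ = (∑ y, μ y * V) - β * (∑ y, μ y * Real.log (μ y / π y)) := by
          rw [Finset.sum_sub_distrib, ← Finset.mul_sum]
      _ = V - β * (∑ y, μ y * Real.log (μ y / π y)) := by
          rw [← Finset.sum_mul, hμsum, one_mul]
  have hπobj : (∑ y, π y * R y) - β * (∑ y, π y * Real.log (π y / πβ y)) = V := by
    rw [hobj π (fun y => (hπpos y).le) hπsum]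
    have : ∀ y, π y * Real.log (π y / π y) = 0 := by
      intro y; rw [div_self (ne_of_gt (hπpos y))]; simp
    rw [Finset.sum_congr rfl fun y _ => this y]
    simp
  intro μ hμpos hμsum
  have hkl_nonneg : 0 ≤ ∑ y, μ y * Real.log (μ y / π y) := by
    have : (0:ℝ) = ∑ y, (μ y - π y) := by rw [Finset.sum_sub_distrib, hμsum, hπsum]; ring
    rw [this]
    exact Finset.sum_le_sum fun y _ => kl_term_le' (hμpos y) (hπpos y)
  constructor
  · rw [hobj μ hμpos hμsum, hπobj]
    nlinarith
  · intro heq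
    rw [hobj μ hμpos hμsum, hπobj] at heq
    have hkl0 : ∑ y, μ y * Real.log (μ y / π y) = 0 := by
      have : β * (∑ y, μ y * Real.log (μ y / π y)) = 0 := by linarith
      exact (mul_eq_zero.mp this).resolve_left (ne_of_gt hβ)
    by_contra hne
    obtain ⟨y₀, hy₀⟩ := Function.ne_iff.mp hne
    have hlt : ∑ y, (μ y - π y) < ∑ y, μ y * Real.log (μ y / π y) := by
      apply Finset.sum_lt_sum
      · exact fun y _ => kl_term_le' (hμpos y) (hπpos y)
      · exact ⟨y₀, Finset.mem_univ _, kl_term_lt' (hμpos y₀) (hπpos y₀) hy₀⟩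
    rw [hkl0] at hlt
    have : ∑ y, (μ y - π y) = 0 := by rw [Finset.sum_sub_distrib, hμsum, hπsum]; ring
    linarith
end
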